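/- arXiv:1209.1601 — 5 statements merged into one kernel-verified Lean document; each statement's English description precedes it below -/
import Mathlib

section
/- Let f and g be commuting orientation-preserving C^∞ diffeomorphisms of [0,1], both different from the identity, having no common fixed point in (0,1) at which both are infinitely tangent to the identity. If g^q = f^p for some p ∈ ℤ \ {0} and q ∈ ℕ \ {0} with p and q coprime, then there exists an orientation-preserving C^∞ diffeomorphism h of [0,1] such that f = h^q and g = h^p. -/
set_option autoImplicit false

open Set

/-- `f : ℝ → ℝ` represents (a smooth extension of) an orientation-preserving `C^∞`
diffeomorphism of the interval `[0,1]`. -/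
def SmoothDiffeoI (f : ℝ → ℝ) : Prop :=
  ContDiff ℝ (⊤ : ℕ∞) f ∧ f 0 = 0 ∧ f 1 = 1 ∧ (∀ x ∈ Icc (0 : ℝ) 1, 0 < deriv f x) ∧
    MapsTo f (Icc (0 : ℝ) 1) (Icc (0 : ℝ) 1)

/-- `f` is infinitely tangent to the identity at `p`. -/
def ITIat (f : ℝ → ℝ) (p : ℝ) : Prop :=
  f p = p ∧ ∀ n : ℕ, 1 ≤ n → iteratedDeriv n (fun x => f x - x) p = 0

/-- `finv` is a two-sided inverse of `f` on the set `s`. -/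
def IsInverseOn (finv f : ℝ → ℝ) (s : Set ℝ) : Prop :=
  (∀ x ∈ s, finv (f x) = x) ∧ ∀ x ∈ s, f (finv x) = x

/-- The `n`-th power (`n ∈ ℤ`) of the bijection `h` with inverse `hinv`. -/
def zpowIter (h hinv : ℝ → ℝ) (n : ℤ) : ℝ → ℝ :=
  if 0 ≤ n then h^[n.toNat] else hinv^[(-n).toNat]

lemma sdi_id : SmoothDiffeoI id := by
  refine ⟨contDiff_id, rfl, rfl, ?_, mapsTo_id _⟩
  intro x _; simp

lemma sdi_comp {φ ψ : ℝ → ℝ} (hφ : SmoothDiffeoI φ) (hψ : SmoothDiffeoI ψ) :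
    SmoothDiffeoI (φ ∘ ψ) := by
  obtain ⟨hc1, h01, h11, hd1, hm1⟩ := hφ
  obtain ⟨hc2, h02, h12, hd2, hm2⟩ := hψ
  refine ⟨hc1.comp hc2, by simp [Function.comp, h02, h01],
    by simp [Function.comp, h12, h11], ?_, hm1.comp hm2⟩
  intro x hx
  rw [deriv_comp x ((hc1.differentiable (by simp)).differentiableAt)
    ((hc2.differentiable (by simp)).differentiableAt)]
  exact mul_pos (hd1 _ (hm2 hx)) (hd2 _ hx)

lemma sdi_iter {φ : ℝ → ℝ} (hφ : SmoothDiffeoI φ) (n : ℕ) : SmoothDiffeoI φ^[n] := by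
  induction n with
  | zero => exact sdi_id
  | succ n ih => rw [Function.iterate_succ]; exact sdi_comp ih hφ

/-- Let `f, g` be commuting orientation-preserving `C^∞` diffeomorphisms of `[0,1]`, both
different from the identity, with no common fixed point in `(0,1)` at which both are
infinitely tangent to the identity. If `g^q = f^p` with `p ∈ ℤ \ {0}`, `q ∈ ℕ \ {0}`
coprime, then `f = h^q` and `g = h^p` for some orientation-preserving `C^∞`
diffeomorphism `h` of `[0,1]`. -/
theorem common_root_of_rational_relation (f g finv : ℝ → ℝ)
    (hf : SmoothDiffeoI f) (hg : SmoothDiffeoI g)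
    (hfinv : SmoothDiffeoI finv) (hinv : IsInverseOn finv f (Icc (0 : ℝ) 1))
    (hcomm : ∀ x ∈ Icc (0 : ℝ) 1, f (g x) = g (f x))
    (hfid : ¬ ∀ x ∈ Icc (0 : ℝ) 1, f x = x)
    (hgid : ¬ ∀ x ∈ Icc (0 : ℝ) 1, g x = x)
    (hnd : ∀ x ∈ Ioo (0 : ℝ) 1, ¬ (ITIat f x ∧ ITIat g x))
    (p : ℤ) (hp : p ≠ 0) (q : ℕ) (hq : q ≠ 0) (hpq : IsCoprime p (q : ℤ))
    (hrel : ∀ x ∈ Icc (0 : ℝ) 1, g^[q] x = zpowIter f finv p x) :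
    ∃ h hinv' : ℝ → ℝ, SmoothDiffeoI h ∧ IsInverseOn hinv' h (Icc (0 : ℝ) 1) ∧
      (∀ x ∈ Icc (0 : ℝ) 1, f x = h^[q] x) ∧
      ∀ x ∈ Icc (0 : ℝ) 1, g x = zpowIter h hinv' p x := by
  classical
  -- the permutation induced by f on [0,1]
  let F : Equiv.Perm (Icc (0:ℝ) 1) :=
    { toFun := fun x => ⟨f x, hf.2.2.2.2 x.2⟩
      invFun := fun x => ⟨finv x, hfinv.2.2.2.2 x.2⟩
      left_inv := fun x => Subtype.ext (hinv.1 x x.2)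
      right_inv := fun x => Subtype.ext (hinv.2 x x.2) }
  -- the permutation induced by g on [0,1]
  have hgc : Continuous g := hg.1.continuous
  have hgmono : StrictMonoOn g (Icc (0:ℝ) 1) :=
    strictMonoOn_of_deriv_pos (convex_Icc 0 1) hgc.continuousOn
      (fun x hx => hg.2.2.2.1 x (interior_subset hx))
  have hgsurj : SurjOn g (Icc (0:ℝ) 1) (Icc (0:ℝ) 1) := by
    have h2 := intermediate_value_Icc (by norm_num : (0:ℝ) ≤ 1) hgc.continuousOn
    rw [hg.2.1, hg.2.2.1] at h2
    exact h2
  have hG0 : Function.Bijective (fun x : (Icc (0:ℝ) 1) => (⟨g x, hg.2.2.2.2 x.2⟩ : Icc (0:ℝ) 1)) := by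
    constructor
    · intro x y hxy
      exact Subtype.ext (hgmono.injOn x.2 y.2 (congrArg Subtype.val hxy))
    · intro y
      obtain ⟨x, hx, hgx⟩ := hgsurj y.2
      exact ⟨⟨x, hx⟩, Subtype.ext hgx⟩
  let G : Equiv.Perm (Icc (0:ℝ) 1) := Equiv.ofBijective _ hG0
  -- coercion lemmas
  have hFapp : ∀ x : (Icc (0:ℝ) 1), (F x : ℝ) = f x := fun x => rfl
  have hFinvapp : ∀ x : (Icc (0:ℝ) 1), (F⁻¹ x : ℝ) = finv x := fun x => rfl
  have hGapp : ∀ x : (Icc (0:ℝ) 1), (G x : ℝ) = g x := fun x => rfl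
  have hFpow : ∀ (n : ℕ) (x : (Icc (0:ℝ) 1)), ((F ^ n) x : ℝ) = f^[n] x := by
    intro n
    induction n with
    | zero => intro x; simp
    | succ n ih =>
      intro x
      rw [pow_succ, Equiv.Perm.mul_apply, ih, Function.iterate_succ_apply, hFapp]
  have hFinvpow : ∀ (n : ℕ) (x : (Icc (0:ℝ) 1)), ((F⁻¹ ^ n) x : ℝ) = finv^[n] x := by
    intro n
    induction n with
    | zero => intro x; simp
    | succ n ih =>
      intro x
      rw [pow_succ, Equiv.Perm.mul_apply, ih, Function.iterate_succ_apply, hFinvapp]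
  have hGpow : ∀ (n : ℕ) (x : (Icc (0:ℝ) 1)), ((G ^ n) x : ℝ) = g^[n] x := by
    intro n
    induction n with
    | zero => intro x; simp
    | succ n ih =>
      intro x
      rw [pow_succ, Equiv.Perm.mul_apply, ih, Function.iterate_succ_apply, hGapp]
  have hFzpow : ∀ (m : ℤ) (x : (Icc (0:ℝ) 1)), ((F ^ m) x : ℝ) = zpowIter f finv m x := by
    intro m x
    by_cases hm : 0 ≤ m
    · have h1 : F ^ m = F ^ m.toNat := by
        rw [← zpow_natCast, Int.toNat_of_nonneg hm]
      rw [h1, hFpow]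
      simp only [zpowIter, if_pos hm]
    · have h1 : F ^ m = (F⁻¹) ^ (-m).toNat := by
        rw [inv_pow, ← zpow_natCast, Int.toNat_of_nonneg (by omega : (0:ℤ) ≤ -m),
          ← zpow_neg, neg_neg]
      rw [h1, hFinvpow]
      simp only [zpowIter, if_neg hm]
  -- group relations
  have hC : Commute G F := by
    show G * F = F * G
    apply Equiv.ext
    intro x
    apply Subtype.ext
    rw [Equiv.Perm.mul_apply, Equiv.Perm.mul_apply, hGapp, hFapp, hFapp, hGapp]
    exact (hcomm x x.2).symm
  have hGF : G ^ (q:ℤ) = F ^ p := by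
    apply Equiv.ext
    intro x
    apply Subtype.ext
    rw [zpow_natCast]
    calc ((G ^ q) x : ℝ) = g^[q] x := hGpow q x
      _ = zpowIter f finv p x := hrel x x.2
      _ = ((F ^ p) x : ℝ) := (hFzpow p x).symm
  -- choose a ≥ 0, b with a*p + b*q = 1
  obtain ⟨u, v, huv⟩ := hpq
  set a : ℤ := u + q * u.natAbs with ha_def
  set b : ℤ := v - p * u.natAbs with hb_def
  have hab : a * p + b * q = 1 := by
    rw [ha_def, hb_def]; linear_combination huv
  have hq1 : (1:ℤ) ≤ (q:ℤ) := by exact_mod_cast Nat.one_le_iff_ne_zero.mpr hq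
  have habs : (u.natAbs : ℤ) = |u| := (Int.abs_eq_natAbs u).symm
  have ha : 0 ≤ a := by
    rw [ha_def, habs]
    nlinarith [abs_nonneg u, neg_le_abs u]
  set an : ℕ := a.toNat with han_def
  have haan : (an : ℤ) = a := Int.toNat_of_nonneg ha
  -- H := G^a * F^b
  set H : Equiv.Perm (Icc (0:ℝ) 1) := G ^ a * F ^ b with hH_def
  have hCab : Commute (G ^ a) (F ^ b) := hC.zpow_zpow a b
  have hHq : H ^ (q:ℤ) = F := by
    have e3 : (G ^ a) ^ (q:ℤ) = F ^ (p * a) := by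
      rw [← zpow_mul, mul_comm a (q:ℤ), zpow_mul, hGF, ← zpow_mul]
    have e4 : (F ^ b) ^ (q:ℤ) = F ^ (b * (q:ℤ)) := (zpow_mul F b (q:ℤ)).symm
    have h1 : H ^ (q:ℤ) = F ^ (p * a + b * q) := by
      rw [hH_def, hCab.mul_zpow, e3, e4, ← zpow_add]
    rw [h1, show p * a + b * q = 1 by linarith, zpow_one]
  have hHp : H ^ p = G := by
    have e1 : (G ^ a) ^ p = G ^ (a * p) := (zpow_mul G a p).symm
    have e2 : (F ^ b) ^ p = G ^ ((q:ℤ) * b) := by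
      rw [← zpow_mul, mul_comm b p, zpow_mul, ← hGF, ← zpow_mul]
    have h1 : H ^ p = G ^ (a * p + q * b) := by
      rw [hH_def, hCab.mul_zpow, e1, e2, ← zpow_add]
    rw [h1, show a * p + q * b = 1 by linarith, zpow_one]
  -- the root h as a function
  set h : ℝ → ℝ := g^[an] ∘ zpowIter f finv b with hh_def
  have hsd : SmoothDiffeoI h := by
    rw [hh_def]
    apply sdi_comp (sdi_iter hg an)
    unfold zpowIter
    split
    · exact sdi_iter hf _
    · exact sdi_iter hfinv _
  have hhH : ∀ (x : ℝ) (hx : x ∈ Icc (0:ℝ) 1), h x = ((H ⟨x, hx⟩ : ℝ)) := by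
    intro x hx
    have h1 : H ⟨x, hx⟩ = (G ^ an) ((F ^ b) ⟨x, hx⟩) := by
      rw [hH_def, Equiv.Perm.mul_apply, ← haan, zpow_natCast]
    rw [hh_def]
    show g^[an] (zpowIter f finv b x) = _
    rw [h1, hGpow, hFzpow]
  have hhHn : ∀ (n : ℕ) (x : ℝ) (hx : x ∈ Icc (0:ℝ) 1),
      h^[n] x = (((H ^ n) ⟨x, hx⟩ : ℝ)) := by
    intro n
    induction n with
    | zero => intro x hx; simp
    | succ n ih =>
      intro x hx
      rw [Function.iterate_succ_apply, hhH x hx, ih _ (H ⟨x, hx⟩).2, Subtype.coe_eta,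
        pow_succ]
      rfl
  have hInj : InjOn h (Icc (0:ℝ) 1) := by
    intro x hx y hy hxy
    have e : H ⟨x, hx⟩ = H ⟨y, hy⟩ := by
      apply Subtype.ext
      rw [← hhH x hx, ← hhH y hy]
      exact hxy
    have e2 := H.injective e
    exact congrArg Subtype.val e2
  have hIm : ∀ x ∈ Icc (0:ℝ) 1, x ∈ h '' (Icc (0:ℝ) 1) := by
    intro x hx
    refine ⟨((H⁻¹ ⟨x, hx⟩ : Icc (0:ℝ) 1) : ℝ), (H⁻¹ ⟨x, hx⟩).2, ?_⟩
    rw [hhH _ (H⁻¹ ⟨x, hx⟩).2, Subtype.coe_eta]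
    simp
  set hinv' : ℝ → ℝ := Function.invFunOn h (Icc (0:ℝ) 1) with hinv'_def
  have hinv'H : ∀ (x : ℝ) (hx : x ∈ Icc (0:ℝ) 1), hinv' x = ((H⁻¹ ⟨x, hx⟩ : ℝ)) := by
    intro x hx
    apply hInj (Function.invFunOn_mem (hIm x hx)) (H⁻¹ ⟨x, hx⟩).2
    rw [Function.invFunOn_eq (hIm x hx), hhH _ (H⁻¹ ⟨x, hx⟩).2, Subtype.coe_eta]
    simp
  have hinv'Hn : ∀ (n : ℕ) (x : ℝ) (hx : x ∈ Icc (0:ℝ) 1),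
      hinv'^[n] x = (((H⁻¹ ^ n) ⟨x, hx⟩ : ℝ)) := by
    intro n
    induction n with
    | zero => intro x hx; simp
    | succ n ih =>
      intro x hx
      rw [Function.iterate_succ_apply, hinv'H x hx, ih _ (H⁻¹ ⟨x, hx⟩).2, Subtype.coe_eta,
        pow_succ]
      rfl
  have hIsInv : IsInverseOn hinv' h (Icc (0:ℝ) 1) := by
    constructor
    · intro x hx
      rw [hhH x hx, hinv'H _ (H ⟨x, hx⟩).2, Subtype.coe_eta]
      simp
    · intro x hx
      rw [hinv'H x hx, hhH _ (H⁻¹ ⟨x, hx⟩).2, Subtype.coe_eta]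
      simp
  refine ⟨h, hinv', hsd, hIsInv, ?_, ?_⟩
  · intro x hx
    have h1 : h^[q] x = (((H ^ q) ⟨x, hx⟩ : ℝ)) := hhHn q x hx
    have h2 : H ^ q = F := by rw [← zpow_natCast, hHq]
    rw [h1, h2, hFapp]
  · intro x hx
    by_cases hp0 : 0 ≤ p
    · have h1 : zpowIter h hinv' p x = h^[p.toNat] x := by
        simp only [zpowIter, if_pos hp0]
      have h2 : H ^ p.toNat = G := by
        rw [← hHp, ← zpow_natCast, Int.toNat_of_nonneg hp0]
      have h3 : h^[p.toNat] x = (((H ^ p.toNat) ⟨x, hx⟩ : ℝ)) := hhHn _ x hx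
      rw [h1, h3, h2, hGapp]
    · have h1 : zpowIter h hinv' p x = hinv'^[(-p).toNat] x := by
        simp only [zpowIter, if_neg hp0]
      have h2 : (H⁻¹) ^ (-p).toNat = G := by
        calc (H⁻¹) ^ (-p).toNat = (H⁻¹) ^ (((-p).toNat : ℤ)) := (zpow_natCast _ _).symm
          _ = H ^ p := by
              rw [Int.toNat_of_nonneg (by omega : (0:ℤ) ≤ -p), inv_zpow, ← zpow_neg, neg_neg]
          _ = G := hHp
      have h3 : hinv'^[(-p).toNat] x = (((H⁻¹ ^ (-p).toNat) ⟨x, hx⟩ : ℝ)) := hinv'Hn _ x hx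
      rw [h1, h3, h2, hGapp]
end

section
/- Let f be an orientation-preserving C¹ diffeomorphism of [0,1] with Df(0) = 1. Then the quantity sup over y ∈ [x, f^{±2}(x)] of |(f(y) − y)/(f(x) − x) − 1| tends to 0 as x tends to 0 with x ∉ Fix(f). -/
set_option autoImplicit false

open Set

set_option maxHeartbeats 1000000

/-- `f : ℝ → ℝ` represents (a `C^r` extension of) an orientation-preserving `C^r`
diffeomorphism of the interval `[a,b]`. -/
def CrDiffeoOn (r : ℕ∞) (f : ℝ → ℝ) (a b : ℝ) : Prop :=
  ContDiff ℝ r f ∧ f a = a ∧ f b = b ∧ (∀ x ∈ Icc a b, 0 < deriv f x) ∧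
    MapsTo f (Icc a b) (Icc a b)

/-- Let `f` be an orientation-preserving `C¹` diffeomorphism of `[0,1]` with `Df(0) = 1`.
Then `sup_{y ∈ [x, f^{±2}(x)]} |(f(y) − y)/(f(x) − x) − 1| → 0` as `x → 0`, `x ∉ Fix(f)`,
where `f^{±2}(x) = max (f²(x), f⁻²(x))`. -/
theorem displacement_ratio_tendsto_zero (f finv : ℝ → ℝ)
    (hf : CrDiffeoOn 1 f 0 1) (hfinv : IsInverseOn finv f (Icc (0 : ℝ) 1))
    (hfinvmaps : MapsTo finv (Icc (0 : ℝ) 1) (Icc (0 : ℝ) 1))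
    (hDf0 : deriv f 0 = 1) :
    ∀ ε > (0 : ℝ), ∃ δ > (0 : ℝ), ∀ x ∈ Ioo (0 : ℝ) 1, x < δ → f x ≠ x →
      ∀ y ∈ Icc x (max (f (f x)) (finv (finv x))),
        |(f y - y) / (f x - x) - 1| < ε := by
  obtain ⟨hsmooth, hf0, hf1, hderiv, hmaps⟩ := hf
  have hdf : Differentiable ℝ f := hsmooth.differentiable (by norm_num)
  have hcont : Continuous (deriv f) := hsmooth.continuous_deriv le_rfl
  -- strict monotonicity on [0,1]
  have hmono : StrictMonoOn f (Icc (0:ℝ) 1) := by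
    apply strictMonoOn_of_deriv_pos (convex_Icc 0 1) hdf.continuous.continuousOn
    intro t ht
    rw [interior_Icc] at ht
    exact hderiv t ⟨ht.1.le, ht.2.le⟩
  intro ε hε
  set ε' : ℝ := min (ε / 7) (1 / 2) with hε'def
  have hε'pos : 0 < ε' := lt_min (by linarith) (by norm_num)
  have hε'le : ε' ≤ ε / 7 := min_le_left _ _
  have hε'half : ε' ≤ 1 / 2 := min_le_right _ _
  -- continuity of deriv f at 0 gives η
  have hca : ContinuousAt (deriv f) 0 := hcont.continuousAt
  obtain ⟨η, hη, hηbound⟩ := Metric.continuousAt_iff.mp hca ε' hε'pos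
  -- the key mean value estimate
  have L : ∀ a ∈ Ico (0:ℝ) η, ∀ b ∈ Ico (0:ℝ) η,
      |(f b - b) - (f a - a)| ≤ ε' * |b - a| := by
    intro a ha b hb
    have h := Convex.norm_image_sub_le_of_norm_deriv_le
      (f := fun t => f t - t) (s := Ico (0:ℝ) η) (C := ε')
      (fun t _ => (hdf t).sub differentiableAt_id) ?_ (convex_Ico 0 η) ha hb
    · simpa [Real.norm_eq_abs] using h
    · intro t ht
      have hd : deriv (fun t => f t - t) t = deriv f t - 1 :=
        (((hdf t).hasDerivAt).sub (hasDerivAt_id t)).deriv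
      rw [Real.norm_eq_abs, hd]
      have : dist t 0 < η := by
        rw [Real.dist_eq, sub_zero, abs_of_nonneg ht.1]; exact ht.2
      have := hηbound this
      rw [Real.dist_eq, hDf0] at this
      exact this.le
  refine ⟨min (η / 4) (1 / 4), lt_min (by linarith) (by norm_num), ?_⟩
  intro x hx hxδ hfx y hy
  obtain ⟨hx0, hx1⟩ := hx
  have hxη : x < η / 4 := lt_of_lt_of_le hxδ (min_le_left _ _)
  have hx4 : x < 1 / 4 := lt_of_lt_of_le hxδ (min_le_right _ _)
  have hxI : x ∈ Icc (0:ℝ) 1 := ⟨hx0.le, hx1.le⟩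
  have hxIco : x ∈ Ico (0:ℝ) η := ⟨hx0.le, by linarith⟩
  have h0Ico : (0:ℝ) ∈ Ico (0:ℝ) η := ⟨le_rfl, by linarith⟩
  -- |g x| ≤ ε' x
  have hgx : |(f x - x)| ≤ ε' * x := by
    have := L 0 h0Ico x hxIco
    rw [hf0] at this
    simpa [abs_of_nonneg hx0.le] using this
  have hgxabs := abs_le.mp hgx
  have hgx0 : f x - x ≠ 0 := sub_ne_zero.mpr hfx
  have hgxpos : 0 < |f x - x| := abs_pos.mpr hgx0
  -- f x bounds
  have hfxI : f x ∈ Icc (0:ℝ) 1 := hmaps hxI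
  have hfxIco : f x ∈ Ico (0:ℝ) η := ⟨hfxI.1, by nlinarith⟩
  -- |g (f x)| ≤ 2 |g x|
  have hgfx : |(f (f x) - f x)| ≤ 2 * |f x - x| := by
    have h1 := L x hxIco (f x) hfxIco
    have h2 := abs_sub_abs_le_abs_sub (f (f x) - f x) (f x - x)
    have h3 : ε' * |f x - x| ≤ 1 / 2 * |f x - x| :=
      mul_le_mul_of_nonneg_right hε'half (abs_nonneg _)
    linarith
  -- f (f x) - x ≤ 3 |g x|
  have hffx : f (f x) - x ≤ 3 * |f x - x| := by
    have := abs_le.mp hgfx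
    have := le_abs_self (f x - x)
    linarith [le_abs_self (f (f x) - f x)]
  -- z := finv x
  set z := finv x with hzdef
  have hzI : z ∈ Icc (0:ℝ) 1 := hfinvmaps hxI
  have hfz : f z = x := hfinv.2 x hxI
  -- z ≤ 2x
  have h2xI : (2*x) ∈ Icc (0:ℝ) 1 := ⟨by linarith, by linarith⟩
  have h2xIco : (2*x) ∈ Ico (0:ℝ) η := ⟨by linarith, by linarith⟩
  have hf2x : x ≤ f (2*x) := by
    have := L 0 h0Ico (2*x) h2xIco
    rw [hf0] at this
    have h := abs_le.mp (by simpa [abs_of_nonneg (by linarith : (0:ℝ) ≤ 2*x)] using this)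
    nlinarith
  have hz2x : z ≤ 2 * x := by
    by_contra h
    push_neg at h
    have := hmono h2xI hzI h
    rw [hfz] at this
    linarith
  have hzIco : z ∈ Ico (0:ℝ) η := ⟨hzI.1, by linarith⟩
  -- |g z| ≤ 2 |g x|
  have hgz : |(f z - z)| ≤ 2 * |f x - x| := by
    have h1 := L x hxIco z hzIco
    have hzx : |z - x| = |f z - z| := by
      rw [hfz, show x - z = -(z - x) by ring, abs_neg, abs_sub_comm]
    rw [hzx] at h1
    have h2 := abs_sub_abs_le_abs_sub (f z - z) (f x - x)
    have h3 : ε' * |f z - z| ≤ 1 / 2 * |f z - z| :=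
      mul_le_mul_of_nonneg_right hε'half (abs_nonneg _)
    linarith
  -- w := finv z
  set w := finv z with hwdef
  have hwI : w ∈ Icc (0:ℝ) 1 := hfinvmaps hzI
  have hfw : f w = z := hfinv.2 z hzI
  have h2zI : (2*z) ∈ Icc (0:ℝ) 1 := ⟨by linarith [hzI.1], by linarith⟩
  have h2zIco : (2*z) ∈ Ico (0:ℝ) η := ⟨by linarith [hzI.1], by linarith⟩
  have hf2z : z ≤ f (2*z) := by
    have := L 0 h0Ico (2*z) h2zIco
    rw [hf0] at this
    have h := abs_le.mp (by simpa [abs_of_nonneg (by linarith [hzI.1] : (0:ℝ) ≤ 2*z)] using this)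
    nlinarith [hzI.1]
  have hw2z : w ≤ 2 * z := by
    by_contra h
    push_neg at h
    have := hmono h2zI hwI h
    rw [hfw] at this
    linarith
  have hwIco : w ∈ Ico (0:ℝ) η := ⟨hwI.1, by linarith⟩
  -- |g w| ≤ 2 |g z| ≤ 4 |g x|
  have hgw : |(f w - w)| ≤ 2 * |f z - z| := by
    have h1 := L z hzIco w hwIco
    have hwz : |w - z| = |f w - w| := by
      rw [hfw, show z - w = -(w - z) by ring, abs_neg, abs_sub_comm]
    rw [hwz] at h1
    have h2 := abs_sub_abs_le_abs_sub (f w - w) (f z - z)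
    have h3 : ε' * |f w - w| ≤ 1 / 2 * |f w - w| :=
      mul_le_mul_of_nonneg_right hε'half (abs_nonneg _)
    linarith
  -- w - x ≤ 6 |g x|
  have hwx : w - x ≤ 6 * |f x - x| := by
    have h1 := le_abs_self (w - z)
    have h2 := le_abs_self (z - x)
    have h3 : |w - z| = |f w - w| := by
      rw [hfw, show z - w = -(w - z) by ring, abs_neg, abs_sub_comm]
    have h4 : |z - x| = |f z - z| := by
      rw [hfz, show x - z = -(z - x) by ring, abs_neg, abs_sub_comm]
    rw [h3] at h1
    rw [h4] at h2
    linarith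
  -- bound for y
  obtain ⟨hyx, hyM⟩ := hy
  have hyub : y - x ≤ 6 * |f x - x| := by
    rcases max_cases (f (f x)) (finv (finv x)) with ⟨hmax, _⟩ | ⟨hmax, _⟩
    · rw [hmax] at hyM
      have := le_abs_self (f x - x)
      nlinarith [abs_nonneg (f x - x)]
    · rw [hmax] at hyM
      linarith
  have hyIco : y ∈ Ico (0:ℝ) η := by
    constructor
    · linarith
    · nlinarith
  -- final estimate
  have hfinal := L x hxIco y hyIco
  have hyx' : |y - x| = y - x := abs_of_nonneg (by linarith)
  rw [hyx'] at hfinal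
  have hkey : |(f y - y) - (f x - x)| < ε * |f x - x| := by
    have h1 : ε' * (y - x) ≤ ε' * (6 * |f x - x|) := by nlinarith
    have h2 : ε' * (6 * |f x - x|) < ε * |f x - x| := by nlinarith
    linarith
  rw [div_sub_one hgx0, abs_div, div_lt_iff₀ hgxpos]
  exact hkey
end

section
/- Let ∂ ⊂ {0,1} and let f ∈ Diff*_∂[0,1] be the time-1 map of the flow of a vector field ξ on [0,1] which is C¹ on [0,1]. Then (a) the function log|ξ(x)/(f(x) − x)| is bounded on [0,1] \ Fix(f); and (b) if Df(0) = 1 and D²f(0) = 0, then ξ(x) ∼ f(x) − x ∼ x − f^{−1}(x) as x → 0. -/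
set_option autoImplicit false
set_option maxHeartbeats 1000000

open Set

/-- `Diff*_∂[0,1]`: the identity, together with the orientation-preserving `C^∞`
diffeomorphisms of `[0,1]` which are infinitely tangent to the identity exactly at the
points of `D` and nowhere else in `[0,1]`. -/
def DiffStar (D : Set ℝ) (f : ℝ → ℝ) : Prop :=
  SmoothDiffeoI f ∧
    ((∀ x ∈ Icc (0 : ℝ) 1, f x = x) ∨ ∀ p ∈ Icc (0 : ℝ) 1, (ITIat f p ↔ p ∈ D))

/-- `φ` is the (complete) flow of the vector field `ξ` on the interval `[a,b]`. -/
def IsFlowOn (ξ : ℝ → ℝ) (φ : ℝ → ℝ → ℝ) (a b : ℝ) : Prop :=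
  (∀ x ∈ Icc a b, φ 0 x = x) ∧
    ∀ x ∈ Icc a b, ∀ t : ℝ, φ t x ∈ Icc a b ∧ HasDerivAt (fun s => φ s x) (ξ (φ t x)) t

/-- Let `f ∈ Diff*_∂[0,1]` be the time-1 map of the flow of a `C¹` vector field `ξ` on
`[0,1]`. Then (a) `log |ξ/(f − id)|` is bounded on `[0,1] \ Fix(f)` (and `ξ` vanishes on
`Fix(f)`), and (b) if `Df(0) = 1` and `D²f(0) = 0`, then
`ξ(x) ∼ f(x) − x ∼ x − f⁻¹(x)` as `x → 0`. -/
theorem szekeres_field_equiv_displacement (D : Set ℝ) (hD : D ⊆ ({0, 1} : Set ℝ))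
    (f finv ξ : ℝ → ℝ) (φ : ℝ → ℝ → ℝ)
    (hf : DiffStar D f) (hfinv : IsInverseOn finv f (Icc (0 : ℝ) 1))
    (hξ : ContDiffOn ℝ 1 ξ (Icc (0 : ℝ) 1))
    (hflow : IsFlowOn ξ φ 0 1) (htime1 : ∀ x ∈ Icc (0 : ℝ) 1, φ 1 x = f x) :
    ((∀ x ∈ Icc (0 : ℝ) 1, f x = x → ξ x = 0) ∧
      ∃ M : ℝ, ∀ x ∈ Icc (0 : ℝ) 1, f x ≠ x → |Real.log (abs (ξ x / (f x - x)))| ≤ M) ∧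
    (deriv f 0 = 1 → iteratedDeriv 2 f 0 = 0 →
      (Filter.Tendsto (fun x => ξ x / (f x - x))
        (nhdsWithin 0 {x : ℝ | x ∈ Ioo (0 : ℝ) 1 ∧ f x ≠ x}) (nhds 1) ∧
       Filter.Tendsto (fun x => ξ x / (x - finv x))
        (nhdsWithin 0 {x : ℝ | x ∈ Ioo (0 : ℝ) 1 ∧ f x ≠ x}) (nhds 1))) := by
  obtain ⟨⟨hfsm, hf0, hf1, hfpos, hfmap⟩, -⟩ := hf
  obtain ⟨hfinv1, hfinv2⟩ := hfinv
  obtain ⟨hflow0, hflowD⟩ := hflow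
  set I := Icc (0:ℝ) 1 with hI
  have h01 : (0:ℝ) ∈ I := ⟨le_rfl, zero_le_one⟩
  have h11 : (1:ℝ) ∈ I := ⟨zero_le_one, le_rfl⟩
  set ξ' := derivWithin ξ I with hξ'def
  have huD : UniqueDiffOn ℝ I := uniqueDiffOn_Icc one_pos
  have hξ'c : ContinuousOn ξ' I := hξ.continuousOn_derivWithin huD le_rfl
  obtain ⟨C0, hC0⟩ := isCompact_Icc.exists_bound_of_continuousOn hξ'c
  set K := max C0 0 with hKdef
  have hK0 : (0:ℝ) ≤ K := le_max_right _ _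
  have hKb : ∀ y ∈ I, |ξ' y| ≤ K := fun y hy => (hC0 y hy).trans (le_max_left _ _)
  have hlip : LipschitzOnWith K.toNNReal ξ I := by
    apply (convex_Icc (0:ℝ) 1).lipschitzOnWith_of_nnnorm_derivWithin_le
      (hξ.differentiableOn one_ne_zero)
    intro y hy
    rw [← NNReal.coe_le_coe]
    simpa [Real.coe_toNNReal _ hK0] using hKb y hy
  -- uniqueness: if ξ vanishes at a point of the orbit, the orbit is constant
  have huniq : ∀ x ∈ I, ∀ t₀ : ℝ, ξ (φ t₀ x) = 0 → ∀ t : ℝ, φ t x = φ t₀ x := by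
    intro x hx t₀ h0 t
    set a : ℝ := min t t₀ - 1
    set b : ℝ := max t t₀ + 1
    have ht₀ : t₀ ∈ Ioo a b :=
      ⟨by simp only [a]; nlinarith [min_le_right t t₀], by
        simp only [b]; nlinarith [le_max_right t t₀]⟩
    have ht : t ∈ Ioo a b :=
      ⟨by simp only [a]; nlinarith [min_le_left t t₀], by
        simp only [b]; nlinarith [le_max_left t t₀]⟩
    have := ODE_solution_unique_of_mem_Ioo (v := fun _ => ξ) (s := fun _ => I)
      (K := K.toNNReal) (fun _ _ => hlip) ht₀
      (f := fun s => φ s x) (g := fun _ => φ t₀ x)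
      (fun s _ => ⟨(hflowD x hx s).2, (hflowD x hx s).1⟩)
      (fun s _ => ⟨by simpa [h0] using hasDerivAt_const s (φ t₀ x), (hflowD x hx t₀).1⟩)
      rfl
    exact this ht
  -- nonvanishing along orbit
  have hnz : ∀ x ∈ I, ξ x ≠ 0 → ∀ t : ℝ, ξ (φ t x) ≠ 0 := by
    intro x hx hxne t h0
    have := huniq x hx t h0 0
    rw [hflow0 x hx] at this
    exact hxne (this ▸ h0)
  have hA : ∀ x ∈ I, ξ x = 0 → f x = x := by
    intro x hx h0
    have h0' : ξ (φ 0 x) = 0 := by rwa [hflow0 x hx]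
    have := huniq x hx 0 h0' 1
    rw [htime1 x hx, hflow0 x hx] at this
    exact this
  -- continuity of orbits
  have hgc : ∀ x ∈ I, Continuous (fun t => φ t x) := by
    intro x hx
    exact continuous_iff_continuousAt.2 fun t => (hflowD x hx t).2.continuousAt
  -- continuity of ξ along orbit
  have hξgc : ∀ x ∈ I, ContinuousOn (fun t => ξ (φ t x)) univ := by
    intro x hx
    exact hξ.continuousOn.comp ((hgc x hx).continuousOn) (fun t _ => (hflowD x hx t).1)
  -- sign constancy (positivity of ratio)
  have hsgn : ∀ x ∈ I, ξ x ≠ 0 → ∀ t : ℝ, 0 < ξ (φ t x) / ξ x := by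
    intro x hx hxne t
    have h0 : φ 0 x = x := hflow0 x hx
    have hne1 : ξ (φ t x) ≠ 0 := hnz x hx hxne t
    have hIVT : (0:ℝ) ∈ uIcc (ξ x) (ξ (φ t x)) → False := by
      intro hmem
      have hsub := intermediate_value_uIcc (a := (0:ℝ)) (b := t)
        (f := fun s => ξ (φ s x)) ((hξgc x hx).mono (subset_univ _))
      simp only [h0] at hsub
      obtain ⟨s, -, hs⟩ := hsub hmem
      exact hnz x hx hxne s hs
    rcases hne1.lt_or_gt with h1 | h1 <;> rcases hxne.lt_or_gt with h2 | h2
    · exact div_pos_iff.2 (Or.inr ⟨h1, h2⟩)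
    · exact absurd (mem_uIcc.2 (Or.inr ⟨h1.le, h2.le⟩)) hIVT
    · exact absurd (mem_uIcc.2 (Or.inl ⟨h2.le, h1.le⟩)) hIVT
    · exact div_pos_iff.2 (Or.inl ⟨h1, h2⟩)
  have hsgnpos : ∀ x ∈ I, 0 < ξ x → ∀ t : ℝ, 0 < ξ (φ t x) := by
    intro x hx hp t
    have h := hsgn x hx (ne_of_gt hp) t
    exact ((div_pos_iff.1 h).resolve_right (fun hc => absurd hp (not_lt.2 hc.2.le))).1
  have hsgnneg : ∀ x ∈ I, ξ x < 0 → ∀ t : ℝ, ξ (φ t x) < 0 := by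
    intro x hx hp t
    have h := hsgn x hx (ne_of_lt hp) t
    exact ((div_pos_iff.1 h).resolve_left (fun hc => absurd hp (not_lt.2 hc.2.le))).1
  -- strict monotonicity / betweenness of orbits
  have hderiv : ∀ x ∈ I, ∀ t : ℝ, deriv (fun s => φ s x) t = ξ (φ t x) :=
    fun x hx t => (hflowD x hx t).2.deriv
  have hbet : ∀ x ∈ I, ξ x ≠ 0 → ∀ t ∈ I, φ t x ∈ uIcc x (f x) := by
    intro x hx hxne t ht
    have h0 : φ 0 x = x := hflow0 x hx
    have h1 : φ 1 x = f x := htime1 x hx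
    rcases hxne.lt_or_gt with hneg | hpos
    · have hmono : StrictAnti (fun t => φ t x) := by
        apply strictAnti_of_deriv_neg
        intro s
        rw [hderiv x hx s]
        exact hsgnneg x hx hneg s
      have l1 : φ 1 x ≤ φ t x := hmono.antitone ht.2
      have l2 : φ t x ≤ φ 0 x := hmono.antitone ht.1
      rw [h0] at l2; rw [h1] at l1
      exact mem_uIcc.2 (Or.inr ⟨l1, l2⟩)
    · have hmono : StrictMono (fun t => φ t x) := by
        apply strictMono_of_deriv_pos
        intro s
        rw [hderiv x hx s]
        exact hsgnpos x hx hpos s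
      have l1 : φ 0 x ≤ φ t x := hmono.monotone ht.1
      have l2 : φ t x ≤ φ 1 x := hmono.monotone ht.2
      rw [h0] at l1; rw [h1] at l2
      exact mem_uIcc.2 (Or.inl ⟨l1, l2⟩)
  -- nonfixed iff ξ ≠ 0
  have hfixne : ∀ x ∈ I, ξ x ≠ 0 → f x ≠ x := by
    intro x hx hxne
    have h0 : φ 0 x = x := hflow0 x hx
    have h1 : φ 1 x = f x := htime1 x hx
    rcases hxne.lt_or_gt with hneg | hpos
    · have hmono : StrictAnti (fun t => φ t x) := by
        apply strictAnti_of_deriv_neg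
        intro s; rw [hderiv x hx s]; exact hsgnneg x hx hneg s
      have := hmono (show (0:ℝ) < 1 by norm_num)
      simp only [h0, h1] at this
      exact ne_of_lt this
    · have hmono : StrictMono (fun t => φ t x) := by
        apply strictMono_of_deriv_pos
        intro s; rw [hderiv x hx s]; exact hsgnpos x hx hpos s
      have := hmono (show (0:ℝ) < 1 by norm_num)
      simp only [h0, h1] at this
      exact ne_of_gt this
  have hfix : ∀ x ∈ I, f x = x → ξ x = 0 := by
    intro x hx hfx
    by_contra hxne
    exact hfixne x hx hxne hfx
  have hξ0 : ξ 0 = 0 := hfix 0 h01 hf0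
  have hξ1 : ξ 1 = 0 := hfix 1 h11 hf1
  -- interior orbit
  have hint : ∀ x ∈ I, ξ x ≠ 0 → ∀ t : ℝ, φ t x ∈ Ioo (0:ℝ) 1 := by
    intro x hx hxne t
    have hmem : φ t x ∈ I := (hflowD x hx t).1
    have hne := hnz x hx hxne t
    refine ⟨lt_of_le_of_ne hmem.1 ?_, lt_of_le_of_ne hmem.2 ?_⟩
    · intro h; exact hne (by rw [← h, hξ0])
    · intro h; exact hne (by rw [h, hξ1])
  -- derivative of ξ at interior points
  have hξD : ∀ y ∈ Ioo (0:ℝ) 1, HasDerivAt ξ (ξ' y) y := by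
    intro y hy
    have hmem : I ∈ nhds y := by rw [hI]; exact Icc_mem_nhds hy.1 hy.2
    have hd : DifferentiableAt ℝ ξ y :=
      ((hξ.differentiableOn one_ne_zero) y (Ioo_subset_Icc_self hy)).differentiableAt hmem
    have : ξ' y = deriv ξ y := by rw [hξ'def]; exact derivWithin_of_mem_nhds hmem
    rw [this]
    exact hd.hasDerivAt
  -- CORE estimate
  have hcore : ∀ x ∈ I, ξ x ≠ 0 → ∀ C' : ℝ, 0 ≤ C' → (∀ t ∈ I, |ξ' (φ t x)| ≤ C') →
      (f x - x) / ξ x ∈ Icc (Real.exp (-C')) (Real.exp C') ∧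
      ξ (f x) / ξ x ∈ Icc (Real.exp (-C')) (Real.exp C') := by
    intro x hx hxne C' hC'0 hCb
    have h0 : φ 0 x = x := hflow0 x hx
    have h1 : φ 1 x = f x := htime1 x hx
    -- derivative of log ∘ ξ ∘ orbit
    have hlogd : ∀ t ∈ I, HasDerivWithinAt (fun s => Real.log (ξ (φ s x))) (ξ' (φ t x)) I t := by
      intro t ht
      have hne1 : ξ (φ t x) ≠ 0 := hnz x hx hxne t
      have h2 : HasDerivAt (fun s => φ s x) (ξ (φ t x)) t := (hflowD x hx t).2
      have h1' : HasDerivAt ξ (ξ' (φ t x)) (φ t x) := hξD _ (hint x hx hxne t)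
      have h12 : HasDerivAt (fun s => ξ (φ s x)) (ξ' (φ t x) * ξ (φ t x)) t := h1'.comp t h2
      have h3 : HasDerivAt (fun s => Real.log (ξ (φ s x)))
          ((ξ (φ t x))⁻¹ * (ξ' (φ t x) * ξ (φ t x))) t :=
        by have h3' := (Real.hasDerivAt_log hne1).comp t h12; exact h3'
      have : (ξ (φ t x))⁻¹ * (ξ' (φ t x) * ξ (φ t x)) = ξ' (φ t x) := by
        field_simp
      rw [this] at h3
      exact h3.hasDerivWithinAt
    have hlb : ∀ t ∈ I, ‖Real.log (ξ (φ t x)) - Real.log (ξ (φ 0 x))‖ ≤ C' * (t - 0) := by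
      intro t ht
      exact norm_image_sub_le_of_norm_deriv_le_segment' (f := fun s => Real.log (ξ (φ s x)))
        (f' := fun s => ξ' (φ s x)) (a := 0) (b := 1) (C := C') hlogd
        (fun s hs => by simpa using hCb s (Ico_subset_Icc_self hs)) t ht
    -- ratio bounds along the orbit
    have hratio : ∀ t ∈ I, ξ (φ t x) / ξ x ∈ Icc (Real.exp (-C')) (Real.exp C') := by
      intro t ht
      have hne1 : ξ (φ t x) ≠ 0 := hnz x hx hxne t
      have hpos : 0 < ξ (φ t x) / ξ x := hsgn x hx hxne t
      have hlogdiv : Real.log (ξ (φ t x) / ξ x) = Real.log (ξ (φ t x)) - Real.log (ξ x) :=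
        Real.log_div hne1 hxne
      have hbd : |Real.log (ξ (φ t x) / ξ x)| ≤ C' := by
        rw [hlogdiv]
        have := hlb t ht
        rw [h0] at this
        calc |Real.log (ξ (φ t x)) - Real.log (ξ x)| ≤ C' * (t - 0) := by simpa using this
          _ ≤ C' := by nlinarith [ht.1, ht.2]
      have heq : ξ (φ t x) / ξ x = Real.exp (Real.log (ξ (φ t x) / ξ x)) :=
        (Real.exp_log hpos).symm
      rw [heq]
      rcases abs_le.1 hbd with ⟨hl, hr⟩
      exact ⟨Real.exp_le_exp.2 hl, Real.exp_le_exp.2 hr⟩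
    constructor
    · -- displacement estimate via FTC
      have hcont : ContinuousOn (fun t => ξ (φ t x)) (uIcc (0:ℝ) 1) :=
        (hξgc x hx).mono (subset_univ _)
      have hintgr : IntervalIntegrable (fun t => ξ (φ t x)) MeasureTheory.volume 0 1 :=
        hcont.intervalIntegrable
      have hFTC : ∫ t in (0:ℝ)..1, ξ (φ t x) = φ 1 x - φ 0 x :=
        intervalIntegral.integral_eq_sub_of_hasDerivAt
          (fun t _ => (hflowD x hx t).2) hintgr
      have hdisp : f x - x = ∫ t in (0:ℝ)..1, ξ (φ t x) := by
        rw [hFTC, h0, h1]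
      have hintgr2 : IntervalIntegrable (fun t => ξ (φ t x) / ξ x) MeasureTheory.volume 0 1 :=
        hintgr.div_const _
      have hval : (f x - x) / ξ x = ∫ t in (0:ℝ)..1, ξ (φ t x) / ξ x := by
        rw [hdisp, intervalIntegral.integral_div]
      rw [hval]
      constructor
      · have := intervalIntegral.integral_mono_on (a := (0:ℝ)) (b := 1) zero_le_one
          (intervalIntegrable_const (c := Real.exp (-C'))) hintgr2
          (fun t ht => by
            have h' : t ∈ I := by rw [hI]; exact ht
            exact (hratio t h').1)
        simpa using this
      · have := intervalIntegral.integral_mono_on (a := (0:ℝ)) (b := 1) zero_le_one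
          hintgr2 (intervalIntegrable_const (c := Real.exp C'))
          (fun t ht => by
            have h' : t ∈ I := by rw [hI]; exact ht
            exact (hratio t h').2)
        simpa using this
    · have := hratio 1 h11
      rwa [h1] at this
  -- generic consequence: from inverse-ratio bounds to the log bound
  have hlogbd : ∀ x ∈ I, f x ≠ x → ∀ C' : ℝ, 0 ≤ C' →
      (f x - x) / ξ x ∈ Icc (Real.exp (-C')) (Real.exp C') →
      ξ x / (f x - x) ∈ Icc (Real.exp (-C')) (Real.exp C') := by
    intro x hx hne C' hC'0 hmem
    have hpos : 0 < (f x - x) / ξ x := lt_of_lt_of_le (Real.exp_pos _) hmem.1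
    have hxne : ξ x ≠ 0 := fun h => hne (hA x hx h)
    have hfne : f x - x ≠ 0 := sub_ne_zero.2 hne
    have hinv : ξ x / (f x - x) = ((f x - x) / ξ x)⁻¹ := by
      field_simp
    rw [hinv]
    constructor
    · rw [Real.exp_neg]
      exact inv_anti₀ hpos hmem.2 |>.trans_eq rfl
    · have : Real.exp (-C') ≤ (f x - x) / ξ x := hmem.1
      rw [Real.exp_neg] at this
      calc ((f x - x) / ξ x)⁻¹ ≤ ((Real.exp C')⁻¹)⁻¹ :=
            inv_anti₀ (by positivity) this
        _ = Real.exp C' := inv_inv _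
  refine ⟨⟨hfix, ⟨K, ?_⟩⟩, ?_⟩
  · -- part (a) bound
    intro x hx hne
    have hxne : ξ x ≠ 0 := fun h => hne (hA x hx h)
    obtain ⟨hd, -⟩ := hcore x hx hxne K hK0 (fun t ht => hKb _ ((hflowD x hx t).1))
    have hmem := hlogbd x hx hne K hK0 hd
    have hpos : 0 < ξ x / (f x - x) := lt_of_lt_of_le (Real.exp_pos _) hmem.1
    rw [abs_of_pos hpos]
    rw [abs_le]
    constructor
    · have := Real.log_le_log (Real.exp_pos _) hmem.1
      rwa [Real.log_exp] at this
    · have := Real.log_le_log hpos hmem.2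
      rwa [Real.log_exp] at this
  -- part (b)
  intro hd1 _h2nd
  -- global comparison |ξ| ≤ e^K |f - id|
  have habs : ∀ x ∈ I, |ξ x| ≤ Real.exp K * |f x - x| := by
    intro x hx
    by_cases hxz : ξ x = 0
    · rw [hxz, abs_zero]; positivity
    · have hne : f x ≠ x := hfixne x hx hxz
      obtain ⟨hd, -⟩ := hcore x hx hxz K hK0 (fun t ht => hKb _ ((hflowD x hx t).1))
      have hmem := hlogbd x hx hne K hK0 hd
      have hpos : 0 < ξ x / (f x - x) := lt_of_lt_of_le (Real.exp_pos _) hmem.1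
      have hfne : f x - x ≠ 0 := sub_ne_zero.2 hne
      have h1 : |ξ x / (f x - x)| ≤ Real.exp K := by rw [abs_of_pos hpos]; exact hmem.2
      calc |ξ x| = |ξ x / (f x - x)| * |f x - x| := by
            rw [← abs_mul, div_mul_cancel₀ _ hfne]
        _ ≤ Real.exp K * |f x - x| := mul_le_mul_of_nonneg_right h1 (abs_nonneg _)
  -- ξ'(0) = 0
  have hξ'0 : ξ' 0 = 0 := by
    have hfd : HasDerivAt f 1 0 := by
      have hdf : DifferentiableAt ℝ f 0 := (hfsm.differentiable (by simp)).differentiableAt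
      have h := hdf.hasDerivAt
      rwa [hd1] at h
    have hslopef : Filter.Tendsto (fun x => f x / x - 1) (nhdsWithin 0 {(0:ℝ)}ᶜ) (nhds 0) := by
      have h := hasDerivAt_iff_tendsto_slope.1 hfd
      have h' : Filter.Tendsto (fun x => slope f 0 x - 1) (nhdsWithin 0 {(0:ℝ)}ᶜ) (nhds 0) := by
        have := h.sub_const 1
        simpa using this
      apply h'.congr'
      filter_upwards [self_mem_nhdsWithin] with x hx
      rw [slope_def_field]
      rw [hf0]
      ring_nf
    have hsq : Filter.Tendsto (fun x => ξ x / x) (nhdsWithin 0 (I \ {0})) (nhds 0) := by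
      apply squeeze_zero_norm' (a := fun x => Real.exp K * |f x / x - 1|)
      · filter_upwards [self_mem_nhdsWithin] with x hx
        obtain ⟨hxI, hx0⟩ := hx
        have hx0' : x ≠ 0 := hx0
        have hxpos : 0 < x := lt_of_le_of_ne hxI.1 (Ne.symm hx0')
        have h1 := habs x hxI
        have h2 : |f x - x| / |x| = |f x / x - 1| := by
          rw [← abs_div]
          congr 1
          field_simp
        calc ‖ξ x / x‖ = |ξ x| / |x| := by rw [Real.norm_eq_abs, abs_div]
          _ ≤ Real.exp K * |f x - x| / |x| := by gcongr
          _ = Real.exp K * (|f x - x| / |x|) := by ring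
          _ = Real.exp K * |f x / x - 1| := by rw [h2]
      · have hmono : nhdsWithin (0:ℝ) (I \ {0}) ≤ nhdsWithin 0 {(0:ℝ)}ᶜ :=
          nhdsWithin_mono 0 (fun x hx => hx.2)
        have := (hslopef.mono_left hmono).abs
        have h' := this.const_mul (Real.exp K)
        simpa using h'
    have hder : HasDerivWithinAt ξ 0 I 0 := by
      rw [hasDerivWithinAt_iff_tendsto_slope]
      apply hsq.congr'
      filter_upwards [self_mem_nhdsWithin] with x hx
      rw [slope_def_field, hξ0]
      ring_nf
    rw [hξ'def]
    exact hder.derivWithin (huD 0 h01)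
  -- smallness of ξ' near 0
  have hsmall : ∀ ε : ℝ, 0 < ε → ∃ δ > 0, ∀ y ∈ I, y < δ → |ξ' y| ≤ ε := by
    intro ε hε
    have hc : Filter.Tendsto ξ' (nhdsWithin 0 I) (nhds 0) := by
      have := hξ'c 0 h01
      rwa [ContinuousWithinAt, hξ'0] at this
    obtain ⟨δ, hδ, h⟩ := Metric.tendsto_nhdsWithin_nhds.1 hc ε hε
    refine ⟨δ, hδ, ?_⟩
    intro y hy hyδ
    have : dist y 0 < δ := by
      rw [Real.dist_eq, sub_zero, abs_of_nonneg hy.1]; exact hyδ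
    have := h hy this
    rw [Real.dist_eq, sub_zero] at this
    exact this.le
  -- strict monotonicity of f
  have hfstrict : StrictMonoOn f I := by
    apply strictMonoOn_of_deriv_pos (convex_Icc (0:ℝ) 1) hfsm.continuous.continuousOn
    intro y hy
    exact hfpos y (interior_subset hy)
  -- surjectivity / inverse structure
  have hsurj : ∀ x ∈ Ioo (0:ℝ) 1, ∃ y ∈ Ioo (0:ℝ) 1, f y = x ∧ finv x = y := by
    intro x hx
    have hsub : Icc (f 0) (f 1) ⊆ f '' Icc 0 1 :=
      intermediate_value_Icc zero_le_one hfsm.continuous.continuousOn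
    rw [hf0, hf1] at hsub
    obtain ⟨y, hyI, hyx⟩ := hsub ⟨hx.1.le, hx.2.le⟩
    have hy0 : y ≠ 0 := by
      intro h; rw [h, hf0] at hyx; exact (ne_of_gt hx.1) hyx.symm
    have hy1 : y ≠ 1 := by
      intro h; rw [h, hf1] at hyx; exact (ne_of_lt hx.2) hyx.symm
    have hfinvy : finv x = y := by rw [← hyx]; exact hfinv1 y hyI
    exact ⟨y, ⟨lt_of_le_of_ne hyI.1 (Ne.symm hy0), lt_of_le_of_ne hyI.2 hy1⟩, hyx, hfinvy⟩
  -- key quantitative estimate near 0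
  have key : ∀ ε : ℝ, 0 < ε → ∃ δ > 0, ∀ x, x ∈ Ioo (0:ℝ) 1 → f x ≠ x → |x| < δ →
      ξ x / (f x - x) ∈ Icc (Real.exp (-(2*ε))) (Real.exp (2*ε)) ∧
      ξ x / (x - finv x) ∈ Icc (Real.exp (-(2*ε))) (Real.exp (2*ε)) := by
    intro ε hε
    obtain ⟨δ₁, hδ₁, hδ₁b⟩ := hsmall ε hε
    obtain ⟨c₀, hc₀, hc₀b⟩ := Metric.continuousAt_iff.1 hfsm.continuous.continuousAt δ₁ hδ₁
    set c := min (min (c₀/2) (1/2)) (δ₁/2) with hcdef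
    have hc : 0 < c := by
      apply lt_min (lt_min (by linarith) (by norm_num)) (by linarith)
    have hcI : c ∈ I := ⟨hc.le, by
      have : c ≤ (1:ℝ)/2 := le_trans (min_le_left _ _) (min_le_right _ _)
      linarith⟩
    have hfcδ : f c < δ₁ := by
      have hd : dist c 0 < c₀ := by
        rw [Real.dist_eq, sub_zero, abs_of_pos hc]
        calc c ≤ c₀/2 := le_trans (min_le_left _ _) (min_le_left _ _)
          _ < c₀ := by linarith
      have := hc₀b hd
      rw [Real.dist_eq, hf0, sub_zero] at this
      calc f c ≤ |f c| := le_abs_self _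
        _ < δ₁ := this
    have hfc0 : 0 < f c := by
      have := hfstrict h01 hcI hc
      rwa [hf0] at this
    refine ⟨min c (f c), lt_min hc hfc0, ?_⟩
    intro x hxIoo hne hxlt
    have hxI : x ∈ I := Ioo_subset_Icc_self hxIoo
    have hxc : x < c := lt_of_lt_of_le (lt_of_abs_lt hxlt) (min_le_left _ _)
    have hxfc : x < f c := lt_of_lt_of_le (lt_of_abs_lt hxlt) (min_le_right _ _)
    have hxδ : x < δ₁ := lt_of_lt_of_le hxc (le_trans (min_le_right _ _) (by linarith))
    have hxne : ξ x ≠ 0 := fun h => hne (hA x hxI h)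
    have hfxδ : f x < δ₁ := lt_trans (hfstrict hxI hcI hxc) hfcδ
    -- orbit bound for x
    have horb : ∀ t ∈ I, |ξ' (φ t x)| ≤ ε := by
      intro t ht
      have hmem := hbet x hxI hxne t ht
      have hmem' : φ t x ≤ max x (f x) := by
        rw [uIcc] at hmem
        exact hmem.2
      have : φ t x < δ₁ := lt_of_le_of_lt hmem' (max_lt hxδ hfxδ)
      exact hδ₁b _ ((hflowD x hxI t).1) this
    obtain ⟨hdisp, hmult⟩ := hcore x hxI hxne ε hε.le horb
    have hsubI : Icc (Real.exp (-ε)) (Real.exp ε) ⊆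
        Icc (Real.exp (-(2*ε))) (Real.exp (2*ε)) := by
      apply Icc_subset_Icc <;> apply Real.exp_le_exp.2 <;> linarith
    constructor
    · exact hsubI (hlogbd x hxI hne ε hε.le hdisp)
    · -- inverse part
      obtain ⟨y, hyIoo, hyx, hfinveq⟩ := hsurj x hxIoo
      have hyI : y ∈ I := Ioo_subset_Icc_self hyIoo
      have hfyne : f y ≠ y := by
        intro h
        apply hne
        have hxy : y = x := by rw [← h, hyx]
        rw [← hxy]
        exact h
      have hyne : ξ y ≠ 0 := fun h => hfyne (hA y hyI h)
      have hyc : y < c := by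
        by_contra hyc
        push_neg at hyc
        have := hfstrict hcI hyI (lt_of_le_of_ne hyc ?_)
        · rw [hyx] at this
          exact absurd hxfc (not_lt.2 this.le)
        · intro h; rw [h, hyx] at hxfc; exact lt_irrefl x hxfc
      have hyδ : y < δ₁ := lt_of_lt_of_le hyc (le_trans (min_le_right _ _) (by linarith))
      have hfyδ : f y < δ₁ := by rw [hyx]; exact hxδ
      have horby : ∀ t ∈ I, |ξ' (φ t y)| ≤ ε := by
        intro t ht
        have hmem := hbet y hyI hyne t ht
        have hmem' : φ t y ≤ max y (f y) := by rw [uIcc] at hmem; exact hmem.2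
        have : φ t y < δ₁ := lt_of_le_of_lt hmem' (max_lt hyδ hfyδ)
        exact hδ₁b _ ((hflowD y hyI t).1) this
      obtain ⟨hdispy, hmulty⟩ := hcore y hyI hyne ε hε.le horby
      have hratioy := hlogbd y hyI hfyne ε hε.le hdispy
      have hfyney : f y - y ≠ 0 := sub_ne_zero.2 hfyne
      have heq : ξ x / (x - finv x) = (ξ (f y) / ξ y) * (ξ y / (f y - y)) := by
        rw [hfinveq, ← hyx]
        rw [div_mul_div_comm, mul_comm (ξ (f y)) (ξ y), mul_div_mul_left _ _ hyne]
      rw [heq]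
      constructor
      · have hsplit : Real.exp (-(2*ε)) = Real.exp (-ε) * Real.exp (-ε) := by
          rw [← Real.exp_add]; ring_nf
        rw [hsplit]
        exact mul_le_mul hmulty.1 hratioy.1 (Real.exp_pos _).le
          ((Real.exp_pos _).le.trans hmulty.1)
      · have hsplit : Real.exp (2*ε) = Real.exp ε * Real.exp ε := by
          rw [← Real.exp_add]; ring_nf
        rw [hsplit]
        exact mul_le_mul hmulty.2 hratioy.2
          ((Real.exp_pos _).le.trans hratioy.1) (Real.exp_pos _).le
  -- conclude via ε–δ characterisation
  have htend : ∀ u : ℝ → ℝ,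
      (∀ ε : ℝ, 0 < ε → ∃ δ > 0, ∀ x, x ∈ Ioo (0:ℝ) 1 → f x ≠ x → |x| < δ →
        u x ∈ Icc (Real.exp (-(2*ε))) (Real.exp (2*ε))) →
      Filter.Tendsto u (nhdsWithin 0 {x : ℝ | x ∈ Ioo (0:ℝ) 1 ∧ f x ≠ x}) (nhds 1) := by
    intro u hu
    rw [Metric.tendsto_nhdsWithin_nhds]
    intro ε₀ hε₀
    set ε := Real.log (1 + ε₀/2) / 2 with hεdef
    have h1p : (1:ℝ) < 1 + ε₀/2 := by linarith
    have hε : 0 < ε := div_pos (Real.log_pos h1p) two_pos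
    obtain ⟨δ, hδ, hkey⟩ := hu ε hε
    refine ⟨δ, hδ, ?_⟩
    intro x hxS hdist
    obtain ⟨hxIoo, hxne⟩ := hxS
    rw [Real.dist_eq, sub_zero] at hdist
    obtain ⟨hl, hr⟩ := hkey x hxIoo hxne hdist
    have hexp : Real.exp (2*ε) = 1 + ε₀/2 := by
      rw [hεdef, show 2 * (Real.log (1 + ε₀/2) / 2) = Real.log (1 + ε₀/2) by ring]
      exact Real.exp_log (by linarith)
    have hexpneg : Real.exp (-(2*ε)) = (1 + ε₀/2)⁻¹ := by
      rw [Real.exp_neg, hexp]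
    rw [Real.dist_eq, abs_lt]
    constructor
    · rw [hexpneg] at hl
      have h1 : (0:ℝ) < 1 + ε₀/2 := by linarith
      have h2 : (1 + ε₀/2)⁻¹ * (1 + ε₀/2) = 1 := inv_mul_cancel₀ (ne_of_gt h1)
      nlinarith [hl]
    · rw [hexp] at hr
      linarith
  constructor
  · apply htend
    intro ε hε
    obtain ⟨δ, hδ, h⟩ := key ε hε
    exact ⟨δ, hδ, fun x h1 h2 h3 => (h x h1 h2 h3).1⟩
  · apply htend
    intro ε hε
    obtain ⟨δ, hδ, h⟩ := key ε hε
    exact ⟨δ, hδ, fun x h1 h2 h3 => (h x h1 h2 h3).2⟩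
end

section
/- (Sergeraert) Let g : [0,1] → ℝ be a C^∞ function which is infinitely flat at 0, i.e., g and all its derivatives vanish at 0. Then for all n ∈ ℕ and all η > 0, one has ‖g‖_{n,[0,x]} = O(‖g‖_{0,[0,x]}^{1−η}) as x → 0. -/
set_option autoImplicit false
set_option maxHeartbeats 1000000

open Set

section SergeraertAux

private lemma serg_itd_diff (f : ℝ → ℝ) (hf : ContDiff ℝ (⊤ : ℕ∞) f) (i : ℕ) :
    Differentiable ℝ (iteratedDeriv i f) :=
  hf.differentiable_iteratedDeriv i (by exact_mod_cast WithTop.coe_lt_top _)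

private lemma serg_itd_hasDerivAt (f : ℝ → ℝ) (hf : ContDiff ℝ (⊤ : ℕ∞) f) (i : ℕ) (t : ℝ) :
    HasDerivAt (iteratedDeriv i f) (iteratedDeriv (i + 1) f t) t := by
  rw [iteratedDeriv_succ]
  exact ((serg_itd_diff f hf i) t).hasDerivAt

private lemma serg_shift_contDiff (f : ℝ → ℝ) (hf : ContDiff ℝ (⊤ : ℕ∞) f) (s : ℝ) :
    ContDiff ℝ (⊤ : ℕ∞) (fun t => f (t + s) - f t) :=
  (hf.comp (contDiff_id.add contDiff_const)).sub hf

private lemma serg_itd_shift_sub (f : ℝ → ℝ) (hf : ContDiff ℝ (⊤ : ℕ∞) f) (s : ℝ) (i : ℕ) :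
    iteratedDeriv i (fun t => f (t + s) - f t)
      = fun t => iteratedDeriv i f (t + s) - iteratedDeriv i f t := by
  induction i with
  | zero => simp
  | succ i ih =>
    have h1 : Differentiable ℝ (fun t => iteratedDeriv i f (t + s)) :=
      (serg_itd_diff f hf i).comp (differentiable_id.add_const s)
    funext t
    rw [iteratedDeriv_succ, ih, deriv_fun_sub (h1 t) ((serg_itd_diff f hf i) t),
      deriv_comp_add_const, iteratedDeriv_succ]

/-- Finite-difference mean value: a smooth function bounded by `M` on a window of length `i*s`
has an `i`-th derivative of size `≤ 2^i M / s^i` somewhere in the window. -/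
private lemma serg_finite_diff_bound (s : ℝ) (hs : 0 < s) :
    ∀ (i : ℕ) (f : ℝ → ℝ), ContDiff ℝ (⊤ : ℕ∞) f → ∀ (a M : ℝ),
      (∀ t ∈ Icc a (a + i * s), |f t| ≤ M) →
      ∃ ξ ∈ Icc a (a + i * s), |iteratedDeriv i f ξ| ≤ 2 ^ i * M / s ^ i := by
  intro i
  induction i with
  | zero =>
    intro f hf a M hM
    refine ⟨a, ?_, ?_⟩
    · simp
    · simpa using hM a (by simp)
  | succ i ih =>
    intro f hf a M hM
    set h : ℝ → ℝ := fun t => f (t + s) - f t with hh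
    have hbd : ∀ t ∈ Icc a (a + i * s), |h t| ≤ 2 * M := by
      intro t ht
      have h1 : t ∈ Icc a (a + (i + 1 : ℕ) * s) := by
        constructor
        · exact ht.1
        · refine ht.2.trans ?_
          push_cast; nlinarith
      have h2 : t + s ∈ Icc a (a + (i + 1 : ℕ) * s) := by
        constructor
        · linarith [ht.1, hs.le]
        · have := ht.2; push_cast; push_cast at this ⊢; nlinarith
      calc |h t| ≤ |f (t + s)| + |f t| := abs_sub _ _
        _ ≤ M + M := add_le_add (hM _ h2) (hM _ h1)
        _ = 2 * M := by ring
    obtain ⟨ξ, hξ, hξ2⟩ := ih h (serg_shift_contDiff f hf s) a (2 * M) hbd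
    rw [serg_itd_shift_sub f hf s i] at hξ2
    obtain ⟨ζ, hζ, hζ2⟩ := exists_hasDerivAt_eq_slope (iteratedDeriv i f)
      (iteratedDeriv (i + 1) f) (by linarith : ξ < ξ + s)
      ((serg_itd_diff f hf i).continuous.continuousOn)
      (fun t _ => serg_itd_hasDerivAt f hf i t)
    refine ⟨ζ, ⟨hξ.1.trans hζ.1.le, ?_⟩, ?_⟩
    · have := hζ.2.le.trans (by linarith [hξ.2] : ξ + s ≤ a + i * s + s)
      refine this.trans (by push_cast; nlinarith)
    · rw [hζ2]
      have hMnonneg : 0 ≤ M :=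
        (abs_nonneg _).trans (hM a ⟨le_refl _, by nlinarith [Nat.cast_nonneg (α := ℝ) (i + 1)]⟩)
      have hξ2' : |iteratedDeriv i f (ξ + s) - iteratedDeriv i f ξ| ≤ 2 ^ i * (2 * M) / s ^ i :=
        hξ2
      have heq : 2 ^ (i + 1) * M / s ^ (i + 1) = (2 ^ i * (2 * M) / s ^ i) / s := by
        field_simp; ring
      rw [abs_div, add_sub_cancel_left, abs_of_pos hs, heq]
      gcongr

/-- Mean value inequality for iterated derivatives. -/
private lemma serg_itd_lip (f : ℝ → ℝ) (hf : ContDiff ℝ (⊤ : ℕ∞) f) (i : ℕ) (a b B : ℝ)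
    (hB : ∀ t ∈ Icc a b, |iteratedDeriv (i + 1) f t| ≤ B) (hb : b ∈ Icc a b) :
    |iteratedDeriv i f b - iteratedDeriv i f a| ≤ B * (b - a) := by
  have := norm_image_sub_le_of_norm_deriv_le_segment'
    (f := iteratedDeriv i f) (f' := iteratedDeriv (i + 1) f) (a := a) (b := b)
    (fun t _ => (serg_itd_hasDerivAt f hf i t).hasDerivWithinAt)
    (fun t ht => hB t (Ico_subset_Icc_self ht)) b hb
  simpa [Real.norm_eq_abs] using this

/-- The key step: bound `g⁽ⁱ⁾` on `[0,x]` using a bound on `g` and on `g⁽ⁱ⁺¹⁾`. -/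
private lemma serg_step_bound (g : ℝ → ℝ) (hg : ContDiff ℝ (⊤ : ℕ∞) g) (x s M B : ℝ) (i : ℕ)
    (hs : 0 < s) (hw : 2 * (i * s) ≤ x) (hBnn : 0 ≤ B)
    (hM : ∀ y ∈ Icc (0:ℝ) x, |g y| ≤ M)
    (hB : ∀ y ∈ Icc (0:ℝ) x, |iteratedDeriv (i + 1) g y| ≤ B) :
    ∀ y ∈ Icc (0:ℝ) x, |iteratedDeriv i g y| ≤ 2 ^ i * M / s ^ i + i * s * B := by
  intro y hy
  have hism : (0:ℝ) ≤ i * s := by positivity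
  by_cases hc : y + i * s ≤ x
  · obtain ⟨ξ, hξ, hξ2⟩ := serg_finite_diff_bound s hs i g hg y M
      (fun t ht => hM t ⟨hy.1.trans ht.1, ht.2.trans hc⟩)
    have hlip := serg_itd_lip g hg i y ξ B
      (fun t ht => hB t ⟨hy.1.trans ht.1, ht.2.trans (hξ.2.trans hc)⟩)
      ⟨hξ.1, le_refl _⟩
    calc |iteratedDeriv i g y|
        ≤ |iteratedDeriv i g ξ| + |iteratedDeriv i g ξ - iteratedDeriv i g y| := by
          have h := abs_sub_abs_le_abs_sub (iteratedDeriv i g y) (iteratedDeriv i g ξ)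
          rw [abs_sub_comm (iteratedDeriv i g ξ)]
          linarith
      _ ≤ 2 ^ i * M / s ^ i + i * s * B := by
          refine add_le_add hξ2 ?_
          refine hlip.trans ?_
          have : ξ - y ≤ i * s := by linarith [hξ.2]
          calc B * (ξ - y) ≤ B * (i * s) := by nlinarith [hξ.1]
            _ = i * s * B := by ring
  · have hyis : (0:ℝ) ≤ y - i * s := by
      push_neg at hc; linarith
    have hwin : Icc (y - i * s) (y - i * s + i * s) ⊆ Icc (0:ℝ) x := by
      intro t ht
      constructor
      · linarith [ht.1]
      · have := ht.2; rw [sub_add_cancel] at this; linarith [hy.2]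
    obtain ⟨ξ, hξ, hξ2⟩ := serg_finite_diff_bound s hs i g hg (y - i * s) M
      (fun t ht => hM t (hwin ht))
    have hξy : ξ ≤ y := by have := hξ.2; rw [sub_add_cancel] at this; exact this
    have hlip := serg_itd_lip g hg i ξ y B
      (fun t ht => hB t ⟨hyis.trans (by linarith [hξ.1] : y - i*s ≤ ξ) |>.trans ht.1,
        ht.2.trans hy.2⟩)
      ⟨hξy, le_refl _⟩
    calc |iteratedDeriv i g y|
        ≤ |iteratedDeriv i g ξ| + |iteratedDeriv i g y - iteratedDeriv i g ξ| := by
          have := abs_sub_abs_le_abs_sub (iteratedDeriv i g y) (iteratedDeriv i g ξ); linarith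
      _ ≤ 2 ^ i * M / s ^ i + i * s * B := by
          refine add_le_add hξ2 ?_
          refine hlip.trans ?_
          have h1 : y - ξ ≤ i * s := by linarith [hξ.1]
          nlinarith

private lemma serg_chain_bound (g : ℝ → ℝ) (hg : ContDiff ℝ (⊤ : ℕ∞) g) (x s M K : ℝ) (m : ℕ)
    (hs : 0 < s) (hws : 2 * (m * s) ≤ x) (hMnn : 0 ≤ M) (hKnn : 0 ≤ K)
    (hM : ∀ y ∈ Icc (0:ℝ) x, |g y| ≤ M)
    (hK : ∀ y ∈ Icc (0:ℝ) x, |iteratedDeriv m g y| ≤ K) :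
    ∀ j ≤ m, ∀ y ∈ Icc (0:ℝ) x,
      |iteratedDeriv (m - j) g y| ≤ (2 ^ m + m + 1) ^ j * M / s ^ (m - j) + (m * s) ^ j * K := by
  intro j
  induction j with
  | zero =>
    intro _ y hy
    have h1 : (0:ℝ) ≤ M / s ^ m := by positivity
    have := hK y hy
    simp only [Nat.sub_zero, pow_zero, one_mul]
    linarith
  | succ j ih =>
    intro hjm y hy
    have hjm' : j ≤ m := by omega
    set i := m - (j + 1) with hi
    have hisucc : i + 1 = m - j := by omega
    set a : ℝ := 2 ^ m + m + 1 with ha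
    have ha1 : (1:ℝ) ≤ a := by
      have : (0:ℝ) ≤ 2 ^ m + (m:ℝ) := by positivity
      simp only [ha]; linarith
    set B : ℝ := a ^ j * M / s ^ (m - j) + (m * s) ^ j * K with hB
    have hBnn : 0 ≤ B := by positivity
    have key := serg_step_bound g hg x s M B i hs ?_ hBnn hM ?_ y hy
    · refine key.trans ?_
      have hms : s ^ (m - j) = s ^ i * s := by rw [← hisucc, pow_succ]
      have him : (i:ℝ) ≤ m := by exact_mod_cast Nat.sub_le _ _
      have e1 : (i:ℝ) * s * B ≤ (m:ℝ) * s * B :=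
        mul_le_mul_of_nonneg_right (mul_le_mul_of_nonneg_right him hs.le) hBnn
      have e2 : (m:ℝ) * s * B = (m:ℝ) * a ^ j * M / s ^ i + ((m:ℝ) * s) ^ (j + 1) * K := by
        rw [hB, hms]
        have hsne : s ≠ 0 := hs.ne'
        field_simp
        ring
      have h2 : (2:ℝ) ^ i ≤ 2 ^ m := pow_le_pow_right₀ (by norm_num) (Nat.sub_le _ _)
      have haj : (1:ℝ) ≤ a ^ j := one_le_pow₀ ha1
      have hm0 : (0:ℝ) ≤ m := Nat.cast_nonneg m
      have e3 : (2:ℝ) ^ i + (m:ℝ) * a ^ j ≤ a ^ (j + 1) := by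
        have hps : a ^ (j + 1) = a ^ j * a := pow_succ a j
        have h4 : (2:ℝ) ^ m ≤ a ^ j * 2 ^ m := le_mul_of_one_le_left (by positivity) haj
        rw [hps]
        simp only [ha]
        nlinarith [h2, haj, h4, hm0]
      have e4 := mul_le_mul_of_nonneg_right e3
        (div_nonneg hMnn (pow_nonneg hs.le i) : (0:ℝ) ≤ M / s ^ i)
      calc 2 ^ i * M / s ^ i + (i:ℝ) * s * B
          ≤ 2 ^ i * M / s ^ i + (m:ℝ) * s * B := add_le_add le_rfl e1
        _ = ((2:ℝ) ^ i + (m:ℝ) * a ^ j) * (M / s ^ i) + ((m:ℝ) * s) ^ (j + 1) * K := by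
            rw [e2]; ring
        _ ≤ a ^ (j + 1) * (M / s ^ i) + ((m:ℝ) * s) ^ (j + 1) * K := add_le_add e4 le_rfl
        _ = a ^ (j + 1) * M / s ^ i + ((m:ℝ) * s) ^ (j + 1) * K := by ring
    · have him : (i:ℝ) ≤ m := by exact_mod_cast Nat.sub_le _ _
      nlinarith
    · intro z hz
      rw [hisucc]
      exact ih hjm' z hz

/-- Taylor-type estimate for flat functions. -/
private lemma serg_flat_taylor (g : ℝ → ℝ) (hg : ContDiff ℝ (⊤ : ℕ∞) g)
    (hflat : ∀ n : ℕ, iteratedDeriv n g 0 = 0) (N : ℕ) (K : ℝ)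
    (hK : ∀ y ∈ Icc (0:ℝ) 1, |iteratedDeriv N g y| ≤ K) :
    ∀ j ≤ N, ∀ y ∈ Icc (0:ℝ) 1, |iteratedDeriv (N - j) g y| ≤ K * y ^ j := by
  have hKnn : 0 ≤ K := (abs_nonneg _).trans (hK 0 (by norm_num))
  intro j
  induction j with
  | zero => intro _ y hy; simpa using hK y hy
  | succ j ih =>
    intro hjN y hy
    have hisucc : N - (j + 1) + 1 = N - j := by omega
    have hy0 : 0 ≤ y := hy.1
    have hyj : ∀ t ∈ Icc (0:ℝ) y, |iteratedDeriv (N - (j + 1) + 1) g t| ≤ K * y ^ j := by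
      intro t ht
      rw [hisucc]
      refine (ih (by omega) t ⟨ht.1, ht.2.trans hy.2⟩).trans ?_
      exact mul_le_mul_of_nonneg_left (pow_le_pow_left₀ ht.1 ht.2 j) hKnn
    have := serg_itd_lip g hg (N - (j + 1)) 0 y (K * y ^ j) hyj ⟨hy0, le_refl _⟩
    rw [hflat (N - (j + 1)), sub_zero, sub_zero] at this
    calc |iteratedDeriv (N - (j + 1)) g y| ≤ K * y ^ j * y := this
      _ = K * y ^ (j + 1) := by ring

private lemma serg_itd_zero_fun (i : ℕ) :
    iteratedDeriv i (fun _ : ℝ => (0:ℝ)) = fun _ => 0 := by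
  induction i with
  | zero => simp
  | succ i ih => rw [iteratedDeriv_succ, ih]; simp

/-- If `g` vanishes on `[0,x]` then so do all its iterated derivatives. -/
private lemma serg_itd_zero (g : ℝ → ℝ) (hg : ContDiff ℝ (⊤ : ℕ∞) g) (x : ℝ) (hx : 0 < x)
    (h0 : ∀ y ∈ Icc (0:ℝ) x, g y = 0) (i : ℕ) :
    ∀ y ∈ Icc (0:ℝ) x, iteratedDeriv i g y = 0 := by
  have heq : EqOn g (fun _ => (0:ℝ)) (Ioo 0 x) := fun t ht => h0 t (Ioo_subset_Icc_self ht)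
  have h1 : EqOn (iteratedDeriv i g) (iteratedDeriv i (fun _ => (0:ℝ))) (Ioo 0 x) :=
    heq.iteratedDeriv_of_isOpen isOpen_Ioo i
  have h2 : EqOn (iteratedDeriv i g) (fun _ => (0:ℝ)) (Ioo 0 x) := by
    intro t ht; rw [h1 ht, serg_itd_zero_fun]
  have h3 : EqOn (iteratedDeriv i g) (fun _ => (0:ℝ)) (closure (Ioo 0 x)) :=
    h2.closure (hg.continuous_iteratedDeriv i (by exact_mod_cast le_top)) continuous_const
  rw [closure_Ioo hx.ne] at h3
  exact fun y hy => h3 hy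

end SergeraertAux

/-- **Sergeraert's estimate.** Let `g : [0,1] → ℝ` be a `C^∞` function which is infinitely
flat at `0`. Then for all `n ∈ ℕ` and `η > 0`,
`‖g‖_{n,[0,x]} = O(‖g‖_{0,[0,x]}^{1−η})` as `x → 0`. -/
theorem sergeraert_flat_estimate (g : ℝ → ℝ)
    (hg : ContDiff ℝ (⊤ : ℕ∞) g)
    (hflat : ∀ n : ℕ, iteratedDeriv n g 0 = 0)
    (n : ℕ) (η : ℝ) (hη : 0 < η) :
    ∃ C > (0 : ℝ), ∃ δ > (0 : ℝ), ∀ x ∈ Ioo (0 : ℝ) 1, x < δ →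
      ∀ i ≤ n, ∀ y ∈ Icc (0 : ℝ) x,
        |iteratedDeriv i g y| ≤ C * (⨆ z : Icc (0 : ℝ) x, |g z.1|) ^ ((1 : ℝ) - η) := by
  classical
  set η' : ℝ := min η (1/2) with hη'def
  have hη'0 : 0 < η' := lt_min hη (by norm_num)
  have hη'le : η' ≤ η := min_le_left _ _
  have hη'half : η' ≤ 1/2 := min_le_right _ _
  set n' : ℕ := max n 1 with hn'def
  have hn'1 : 1 ≤ n' := le_max_right _ _
  have hnn' : n ≤ n' := le_max_left _ _
  have hn'pos : (0:ℝ) < n' := by exact_mod_cast hn'1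
  set N : ℕ := ⌈(2 * (n':ℝ)) / η'⌉₊ with hNdef
  have hNge : (2 * (n':ℝ)) / η' ≤ (N:ℝ) := Nat.le_ceil _
  have hN1 : 1 ≤ N := by
    rw [hNdef]
    exact Nat.one_le_ceil_iff.mpr (by positivity)
  set m : ℕ := n' + N with hmdef
  have hm1 : 1 ≤ m := by omega
  have hm0 : (0:ℝ) < m := by exact_mod_cast hm1
  -- bounds on high derivatives on [0,1]
  obtain ⟨K₀, hK₀⟩ := (isCompact_Icc (a := (0:ℝ)) (b := 1)).exists_bound_of_continuousOn
    ((hg.continuous_iteratedDeriv m (by exact_mod_cast le_top)).continuousOn)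
  set K : ℝ := max K₀ 1 with hKdef
  have hK1 : (1:ℝ) ≤ K := le_max_right _ _
  have hKpos : (0:ℝ) < K := lt_of_lt_of_le one_pos hK1
  have hK : ∀ y ∈ Icc (0:ℝ) 1, |iteratedDeriv m g y| ≤ K := by
    intro y hy
    calc |iteratedDeriv m g y| = ‖iteratedDeriv m g y‖ := (Real.norm_eq_abs _).symm
      _ ≤ K₀ := hK₀ y hy
      _ ≤ K := le_max_left _ _
  obtain ⟨KN₀, hKN₀⟩ := (isCompact_Icc (a := (0:ℝ)) (b := 1)).exists_bound_of_continuousOn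
    ((hg.continuous_iteratedDeriv N (by exact_mod_cast le_top)).continuousOn)
  set KN : ℝ := max KN₀ 1 with hKNdef
  have hKN1 : (1:ℝ) ≤ KN := le_max_right _ _
  have hKNpos : (0:ℝ) < KN := lt_of_lt_of_le one_pos hKN1
  have hKN : ∀ y ∈ Icc (0:ℝ) 1, |iteratedDeriv N g y| ≤ KN := by
    intro y hy
    calc |iteratedDeriv N g y| = ‖iteratedDeriv N g y‖ := (Real.norm_eq_abs _).symm
      _ ≤ KN₀ := hKN₀ y hy
      _ ≤ KN := le_max_left _ _
  set C : ℝ := ((2:ℝ) ^ m + m + 1) ^ m + 1 with hCdef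
  have hC : 0 < C := by positivity
  set δ : ℝ := min (1 / (2 * KN))
      (min (1 / (KN * ((m:ℝ) ^ m * K))) (1 / (2 * (m:ℝ) * KN + 1))) with hδdef
  have hδ : 0 < δ := by positivity
  refine ⟨C, hC, δ, hδ, ?_⟩
  intro x hx hxδ i hin y hy
  have hx0 : 0 < x := hx.1
  have hx1 : x ≤ 1 := hx.2.le
  set M : ℝ := ⨆ z : Icc (0:ℝ) x, |g z.1| with hMdef
  have hne : Nonempty (Icc (0:ℝ) x) := (nonempty_Icc.mpr hx0.le).to_subtype
  have hbdd : BddAbove (range fun z : Icc (0:ℝ) x => |g z.1|) := by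
    have h1 : BddAbove ((fun t => |g t|) '' Icc (0:ℝ) x) :=
      (isCompact_Icc.image_of_continuousOn
        ((continuous_abs.comp hg.continuous).continuousOn)).bddAbove
    exact (image_eq_range (fun t => |g t|) (Icc (0:ℝ) x)) ▸ h1
  have hMb : ∀ t ∈ Icc (0:ℝ) x, |g t| ≤ M := fun t ht => le_ciSup hbdd ⟨t, ht⟩
  have hM0 : 0 ≤ M := (abs_nonneg _).trans (hMb 0 ⟨le_refl _, hx0.le⟩)
  -- Taylor estimate : M ≤ KN * x ^ N
  have htay := serg_flat_taylor g hg hflat N KN hKN N (le_refl N)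
  have hMle : M ≤ KN * x ^ N := by
    refine ciSup_le fun z => ?_
    have hz1 : z.1 ∈ Icc (0:ℝ) 1 := ⟨z.2.1, z.2.2.trans hx1⟩
    have := htay z.1 hz1
    rw [Nat.sub_self, iteratedDeriv_zero] at this
    refine this.trans ?_
    exact mul_le_mul_of_nonneg_left (pow_le_pow_left₀ z.2.1 z.2.2 N) hKNpos.le
  have hxN : x ^ N ≤ x := by
    calc x ^ N ≤ x ^ 1 := pow_le_pow_of_le_one hx0.le hx1 hN1
      _ = x := pow_one x
  have hMx : M ≤ KN * x := hMle.trans (mul_le_mul_of_nonneg_left hxN hKNpos.le)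
  have hxδ1 : x < 1 / (2 * KN) := lt_of_lt_of_le hxδ (min_le_left _ _)
  have hxδ2 : x < 1 / (KN * ((m:ℝ) ^ m * K)) :=
    lt_of_lt_of_le hxδ ((min_le_right _ _).trans (min_le_left _ _))
  have hxδ3 : x < 1 / (2 * (m:ℝ) * KN + 1) :=
    lt_of_lt_of_le hxδ ((min_le_right _ _).trans (min_le_right _ _))
  have hM1 : M ≤ 1 := by
    have : KN * x ≤ 1 / 2 := by
      rw [lt_div_iff₀ (by positivity)] at hxδ1
      nlinarith
    linarith
  have hMsmall : (m:ℝ) ^ m * K * M ≤ 1 := by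
    rw [lt_div_iff₀ (by positivity)] at hxδ2
    have hmmK : (0:ℝ) < (m:ℝ) ^ m * K := by positivity
    nlinarith
  by_cases hMpos : 0 < M
  swap
  · -- M = 0 : g vanishes on [0,x]
    have hMeq : M = 0 := le_antisymm (not_lt.1 hMpos) hM0
    have h0 : ∀ t ∈ Icc (0:ℝ) x, g t = 0 := by
      intro t ht
      have := hMb t ht
      rw [hMeq] at this
      exact abs_eq_zero.1 (le_antisymm this (abs_nonneg _))
    have := serg_itd_zero g hg x hx0 h0 i y hy
    rw [this, abs_zero]
    exact mul_nonneg hC.le (Real.rpow_nonneg hM0 _)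
  -- main case
  set s : ℝ := M ^ (η' / (n':ℝ)) with hsdef
  have hs0 : 0 < s := Real.rpow_pos_of_pos hMpos _
  have hs1 : s ≤ 1 := Real.rpow_le_one hM0 hM1 (by positivity)
  -- s ≤ KN * x^2
  have hsx : s ≤ KN * x ^ 2 := by
    have e := div_pos hη'0 hn'pos
    have h1 : s ≤ (KN * x ^ N) ^ (η' / (n':ℝ)) :=
      Real.rpow_le_rpow hM0 hMle e.le
    have h2 : (KN * x ^ N) ^ (η' / (n':ℝ))
        = KN ^ (η' / (n':ℝ)) * (x ^ N) ^ (η' / (n':ℝ)) :=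
      Real.mul_rpow hKNpos.le (by positivity)
    have h3 : KN ^ (η' / (n':ℝ)) ≤ KN := by
      nth_rewrite 2 [← Real.rpow_one KN]
      refine Real.rpow_le_rpow_of_exponent_le hKN1 ?_
      rw [div_le_one hn'pos]
      have h1n : (1:ℝ) ≤ (n':ℝ) := by exact_mod_cast hn'1
      linarith
    have h4 : (x ^ N) ^ (η' / (n':ℝ)) = x ^ ((N:ℝ) * (η' / (n':ℝ))) := by
      rw [← Real.rpow_natCast x N, ← Real.rpow_mul hx0.le]
    have h5 : (2:ℝ) ≤ (N:ℝ) * (η' / (n':ℝ)) := by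
      rw [div_le_iff₀ hη'0] at hNge
      have heq : (N:ℝ) * (η' / (n':ℝ)) = ((N:ℝ) * η') / (n':ℝ) := by ring
      rw [heq, le_div_iff₀ hn'pos]
      nlinarith
    have h6 : x ^ ((N:ℝ) * (η' / (n':ℝ))) ≤ x ^ (2:ℝ) :=
      Real.rpow_le_rpow_of_exponent_ge hx0 hx1 h5
    have h7 : x ^ (2:ℝ) = x ^ 2 := by
      rw [← Real.rpow_natCast x 2]; norm_num
    calc s ≤ KN ^ (η' / (n':ℝ)) * (x ^ N) ^ (η' / (n':ℝ)) := h2 ▸ h1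
      _ ≤ KN * (x ^ N) ^ (η' / (n':ℝ)) := by
          refine mul_le_mul_of_nonneg_right h3 ?_
          positivity
      _ = KN * x ^ ((N:ℝ) * (η' / (n':ℝ))) := by rw [h4]
      _ ≤ KN * x ^ (2:ℝ) := mul_le_mul_of_nonneg_left h6 hKNpos.le
      _ = KN * x ^ 2 := by rw [h7]
  have hws : 2 * ((m:ℝ) * s) ≤ x := by
    rw [lt_div_iff₀ (by positivity)] at hxδ3
    nlinarith [hs0.le, hx0.le, mul_le_mul_of_nonneg_left hsx (by positivity : (0:ℝ) ≤ 2 * (m:ℝ))]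
  -- apply the chain bound
  have hii : i ≤ m := le_trans hin (le_trans hnn' (by omega))
  have hmmi : m - (m - i) = i := by omega
  have hchain := serg_chain_bound g hg x s M K m hs0 hws hM0 hKpos.le hMb
    (fun t ht => hK t ⟨ht.1, ht.2.trans hx1⟩) (m - i) (Nat.sub_le _ _) y hy
  rw [hmmi] at hchain
  set a : ℝ := (2:ℝ) ^ m + m + 1 with hadef
  have ha1 : (1:ℝ) ≤ a := by
    have : (0:ℝ) ≤ 2 ^ m + (m:ℝ) := by positivity
    simp only [hadef]; linarith
  -- bound the first term
  have hin' : i ≤ n' := hin.trans hnn'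
  have hfirst : a ^ (m - i) * M / s ^ i ≤ a ^ m * (M ^ ((1:ℝ) - η')) := by
    have hp1 : a ^ (m - i) ≤ a ^ m := pow_le_pow_right₀ ha1 (Nat.sub_le _ _)
    have hp2 : s ^ n' ≤ s ^ i := pow_le_pow_of_le_one hs0.le hs1 hin'
    have hsn : s ^ n' = M ^ (η' : ℝ) := by
      rw [hsdef, ← Real.rpow_natCast (M ^ (η' / (n':ℝ))) n', ← Real.rpow_mul hM0]
      congr 1
      field_simp
    have hdiv : M / s ^ i ≤ M / s ^ n' := by
      rw [div_le_div_iff₀ (pow_pos hs0 i) (pow_pos hs0 n')]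
      exact mul_le_mul_of_nonneg_left hp2 hM0
    have hMn : M / s ^ n' = M ^ ((1:ℝ) - η') := by
      rw [hsn, Real.rpow_sub hMpos, Real.rpow_one]
    calc a ^ (m - i) * M / s ^ i = a ^ (m - i) * (M / s ^ i) := by ring
      _ ≤ a ^ m * (M / s ^ n') :=
          mul_le_mul hp1 hdiv (by positivity) (by positivity)
      _ = a ^ m * (M ^ ((1:ℝ) - η')) := by rw [hMn]
  -- bound the second term
  have hms1 : (m:ℝ) * s ≤ 1 := by nlinarith
  have hms0 : (0:ℝ) ≤ (m:ℝ) * s := by positivity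
  have hsecond : ((m:ℝ) * s) ^ (m - i) * K ≤ M ^ ((1:ℝ) - η') := by
    have hp1 : ((m:ℝ) * s) ^ (m - i) ≤ ((m:ℝ) * s) ^ (m - n') :=
      pow_le_pow_of_le_one hms0 hms1 (by omega)
    have hmn' : m - n' = N := by omega
    have hp2 : ((m:ℝ) * s) ^ N ≤ (m:ℝ) ^ m * s ^ N := by
      rw [mul_pow]
      refine mul_le_mul_of_nonneg_right ?_ (by positivity)
      refine pow_le_pow_right₀ ?_ (by omega)
      exact_mod_cast hm1
    have hsN : s ^ N = M ^ ((η' / (n':ℝ)) * N) := by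
      rw [hsdef, ← Real.rpow_natCast (M ^ (η' / (n':ℝ))) N, ← Real.rpow_mul hM0]
    have hexp : (2:ℝ) ≤ (η' / (n':ℝ)) * N := by
      rw [div_le_iff₀ hη'0] at hNge
      have heq : (η' / (n':ℝ)) * N = (η' * (N:ℝ)) / (n':ℝ) := by ring
      rw [heq, le_div_iff₀ hn'pos]
      nlinarith
    have hp3 : M ^ ((η' / (n':ℝ)) * N) ≤ M ^ (2:ℝ) :=
      Real.rpow_le_rpow_of_exponent_ge hMpos hM1 hexp
    have hM2 : M ^ (2:ℝ) = M * M := by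
      rw [show (2:ℝ) = ((2:ℕ):ℝ) by norm_num, Real.rpow_natCast]
      ring
    have hMM : M ≤ M ^ ((1:ℝ) - η') := by
      nth_rewrite 1 [← Real.rpow_one M]
      exact Real.rpow_le_rpow_of_exponent_ge hMpos hM1 (by linarith)
    calc ((m:ℝ) * s) ^ (m - i) * K ≤ ((m:ℝ) * s) ^ (m - n') * K :=
          mul_le_mul_of_nonneg_right hp1 hKpos.le
      _ = ((m:ℝ) * s) ^ N * K := by rw [hmn']
      _ ≤ (m:ℝ) ^ m * s ^ N * K := mul_le_mul_of_nonneg_right hp2 hKpos.le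
      _ = (m:ℝ) ^ m * M ^ ((η' / (n':ℝ)) * N) * K := by rw [hsN]
      _ ≤ (m:ℝ) ^ m * M ^ (2:ℝ) * K := by
          refine mul_le_mul_of_nonneg_right ?_ hKpos.le
          exact mul_le_mul_of_nonneg_left hp3 (by positivity)
      _ = ((m:ℝ) ^ m * K * M) * M := by rw [hM2]; ring
      _ ≤ 1 * M := mul_le_mul_of_nonneg_right hMsmall hM0
      _ = M := one_mul M
      _ ≤ M ^ ((1:ℝ) - η') := hMM
  -- conclude
  have hfinal : |iteratedDeriv i g y| ≤ C * M ^ ((1:ℝ) - η') := by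
    calc |iteratedDeriv i g y| ≤ a ^ (m - i) * M / s ^ i + ((m:ℝ) * s) ^ (m - i) * K := hchain
      _ ≤ a ^ m * (M ^ ((1:ℝ) - η')) + M ^ ((1:ℝ) - η') := add_le_add hfirst hsecond
      _ = C * M ^ ((1:ℝ) - η') := by rw [hCdef, hadef]; ring
  refine hfinal.trans ?_
  refine mul_le_mul_of_nonneg_left ?_ hC.le
  exact Real.rpow_le_rpow_of_exponent_ge hMpos hM1 (by linarith)
end

section
/- Let f be an orientation-preserving C^∞ diffeomorphism of the circle 𝕋¹ = ℝ/ℤ with irrational rotation number, and let g be an orientation-preserving homeomorphism of 𝕋¹ commuting with f. If g has a fixed point, then g = id. -/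
set_option autoImplicit false

open Set Filter

/-- `F : ℝ → ℝ` is the lift of an orientation-preserving `C^∞` diffeomorphism of the
circle `𝕋¹ = ℝ/ℤ`. -/
def SmoothCircleLift (F : ℝ → ℝ) : Prop :=
  ContDiff ℝ (⊤ : ℕ∞) F ∧ (∀ x : ℝ, F (x + 1) = F x + 1) ∧ ∀ x : ℝ, 0 < deriv F x

/-- `G : ℝ → ℝ` is the lift of an orientation-preserving homeomorphism of the circle. -/
def CircleHomeoLift (G : ℝ → ℝ) : Prop :=
  Continuous G ∧ StrictMono G ∧ Function.Surjective G ∧ ∀ x : ℝ, G (x + 1) = G x + 1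

/-- The circle map with lift `F` has rotation number (the class mod `ℤ` of) `ρ`. -/
def HasRotationNumber (F : ℝ → ℝ) (ρ : ℝ) : Prop :=
  Tendsto (fun n : ℕ => F^[n] 0 / n) atTop (nhds ρ)


namespace DAux

variable {F : ℝ → ℝ}

lemma map_add_int (hper : ∀ x : ℝ, F (x + 1) = F x + 1) (x : ℝ) (m : ℤ) :
    F (x + m) = F x + m := by
  induction m using Int.induction_on with
  | zero => simp
  | succ n ih =>
      have : x + ((n : ℤ) + 1 : ℤ) = (x + n) + 1 := by push_cast; ring
      rw [this, hper]; push_cast at ih ⊢; rw [ih]; ring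
  | pred n ih =>
      have h := hper (x + (-(n : ℤ) - 1 : ℤ))
      have e1 : x + (-(n : ℤ) - 1 : ℤ) + 1 = x + (-(n:ℤ) : ℤ) := by push_cast; ring
      rw [e1, ih] at h
      have : F (x + (-(n:ℤ) - 1 : ℤ)) = F x + (-(n:ℤ) - 1 : ℤ) := by
        push_cast at h ⊢; linarith
      simpa using this

lemma iterate_add_int (hper : ∀ x : ℝ, F (x + 1) = F x + 1) (n : ℕ) (x : ℝ) (m : ℤ) :
    F^[n] (x + m) = F^[n] x + m := by
  induction n with
  | zero => simp
  | succ k ih => rw [Function.iterate_succ_apply', Function.iterate_succ_apply', ih,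
      map_add_int hper]

end DAux

namespace DAux
open Real Finset

variable {F : ℝ → ℝ}

lemma per_int {g : ℝ → ℝ} (h : ∀ x : ℝ, g (x + 1) = g x) (x : ℝ) (m : ℤ) :
    g (x + m) = g x := by
  induction m using Int.induction_on with
  | zero => simp
  | succ n ih =>
      have e : x + ((n : ℤ) + 1 : ℤ) = (x + (n : ℤ)) + 1 := by push_cast; ring
      rw [e, h, ih]
  | pred n ih =>
      have e : x + (-(n : ℤ) : ℤ) = (x + (-(n : ℤ) - 1 : ℤ)) + 1 := by push_cast; ring
      rw [e, h] at ih; rw [ih]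

section Deriv

lemma diffF (hd : ContDiff ℝ (⊤ : ℕ∞) F) : Differentiable ℝ F := hd.differentiable (by simp)

lemma contDiff_derivF (hd : ContDiff ℝ (⊤ : ℕ∞) F) : ContDiff ℝ (⊤ : ℕ∞) (deriv F) := (contDiff_infty_iff_deriv.mp hd).2

lemma derivF_per (hper : ∀ x : ℝ, F (x + 1) = F x + 1) : ∀ x : ℝ, deriv F (x + 1) = deriv F x := by
  intro x
  have h1 : deriv (fun y => F (y + 1)) x = deriv F (x + 1) := by
    simpa using deriv_comp_add_const F 1 x
  have h2 : (fun y => F (y + 1)) = fun y => F y + 1 := funext hper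
  rw [h2] at h1
  rw [← h1, deriv_add_const]

/-- iterated derivative as a product -/
lemma hasDerivAt_iter (hd : ContDiff ℝ (⊤ : ℕ∞) F) (n : ℕ) (x : ℝ) :
    HasDerivAt F^[n] (∏ i ∈ Finset.range n, deriv F (F^[i] x)) x := by
  induction n with
  | zero => simpa using hasDerivAt_id x
  | succ k ih =>
      rw [Function.iterate_succ']
      have hF : HasDerivAt F (deriv F (F^[k] x)) (F^[k] x) :=
        (diffF hd (F^[k] x)).hasDerivAt
      have := hF.comp x ih
      rw [Finset.prod_range_succ]
      rw [mul_comm]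
      exact this

lemma derivIter_pos (hpos : ∀ x : ℝ, 0 < deriv F x) (n : ℕ) (x : ℝ) :
    0 < ∏ i ∈ Finset.range n, deriv F (F^[i] x) :=
  Finset.prod_pos fun i _ => hpos _

end Deriv

end DAux

namespace DAux
open Real Finset
variable {F : ℝ → ℝ}

noncomputable def phi (F : ℝ → ℝ) : ℝ → ℝ := fun x => Real.log (deriv F x)
noncomputable def phi' (F : ℝ → ℝ) : ℝ → ℝ := fun x => (deriv F x)⁻¹ * deriv (deriv F) x

lemma deriv_per {g : ℝ → ℝ} (h : ∀ x : ℝ, g (x + 1) = g x) (x : ℝ) :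
    deriv g (x + 1) = deriv g x := by
  have h1 : deriv (fun y => g (y + 1)) x = deriv g (x + 1) := by
    simpa using deriv_comp_add_const g 1 x
  have h2 : (fun y => g (y + 1)) = g := funext h
  rw [h2] at h1
  rw [← h1]

lemma hasDerivAt_phi (hd : ContDiff ℝ (⊤ : ℕ∞) F) (hpos : ∀ x : ℝ, 0 < deriv F x) (x : ℝ) :
    HasDerivAt (phi F) (phi' F x) x := by
  have h1 : HasDerivAt (deriv F) (deriv (deriv F) x) x :=
    (((contDiff_infty_iff_deriv.mp hd).2.differentiable (by simp)) x).hasDerivAt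
  exact (Real.hasDerivAt_log (hpos x).ne').comp x h1

lemma cont_phi' (hd : ContDiff ℝ (⊤ : ℕ∞) F) (hpos : ∀ x : ℝ, 0 < deriv F x) :
    Continuous (phi' F) := by
  have h2 := (contDiff_infty_iff_deriv.mp hd).2
  exact ((h2.continuous.inv₀ fun x => (hpos x).ne').mul
    ((contDiff_infty_iff_deriv.mp h2).2.continuous))

lemma phi'_per (hd : ContDiff ℝ (⊤ : ℕ∞) F) (hper : ∀ x : ℝ, F (x + 1) = F x + 1) (x : ℝ) :
    phi' F (x + 1) = phi' F x := by
  have h1 := derivF_per hper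
  have h2 : ∀ y : ℝ, deriv (deriv F) (y + 1) = deriv (deriv F) y := fun y => deriv_per h1 y
  simp only [phi', h1 x, h2 x]

/-- global Lipschitz bound for `phi` -/
lemma exists_lip (hd : ContDiff ℝ (⊤ : ℕ∞) F) (hper : ∀ x : ℝ, F (x + 1) = F x + 1)
    (hpos : ∀ x : ℝ, 0 < deriv F x) :
    ∃ M : ℝ, 0 ≤ M ∧ ∀ x y : ℝ, |phi F x - phi F y| ≤ M * |x - y| := by
  obtain ⟨M, hM⟩ := (isCompact_Icc (a := (0:ℝ)) (b := 1)).exists_bound_of_continuousOn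
    (cont_phi' hd hpos).continuousOn
  have hM0 : 0 ≤ M := le_trans (norm_nonneg _) (hM 0 (by norm_num))
  have hbound : ∀ x : ℝ, |phi' F x| ≤ M := by
    intro x
    have hfr : phi' F x = phi' F (x - ⌊x⌋) := by
      have := per_int (g := phi' F) (phi'_per hd hper) (x - ⌊x⌋) ⌊x⌋
      rw [sub_add_cancel] at this
      exact this
    rw [hfr]
    exact hM _ ⟨sub_nonneg.2 (Int.floor_le x), le_of_lt (by linarith [Int.lt_floor_add_one x])⟩
  have aux : ∀ x y : ℝ, y < x → |phi F x - phi F y| ≤ M * (x - y) := by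
    intro x y hlt
    obtain ⟨c, _, hc⟩ := exists_hasDerivAt_eq_slope (phi F) (phi' F) hlt
      (fun z _ => (hasDerivAt_phi hd hpos z).continuousAt.continuousWithinAt)
      (fun z _ => hasDerivAt_phi hd hpos z)
    have he : phi F x - phi F y = phi' F c * (x - y) := by
      rw [hc, div_mul_cancel₀ _ (sub_ne_zero.2 hlt.ne')]
    calc |phi F x - phi F y| = |phi' F c| * |x - y| := by rw [he, abs_mul]
    _ ≤ M * (x - y) := by
        rw [abs_of_pos (by linarith : (0:ℝ) < x - y)]
        exact mul_le_mul_of_nonneg_right (hbound c) (by linarith)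
  refine ⟨M, hM0, fun x y => ?_⟩
  rcases lt_trichotomy x y with h | h | h
  · rw [abs_sub_comm, abs_sub_comm x y]
    exact (aux y x h).trans (le_of_eq (by rw [abs_of_pos (by linarith : (0:ℝ) < y - x)]))
  · simp [h]
  · exact (aux x y h).trans (le_of_eq (by rw [abs_of_pos (by linarith : (0:ℝ) < x - y)]))
end DAux

namespace DAux
open Real Finset
variable {F : ℝ → ℝ}

noncomputable def Dn (F : ℝ → ℝ) (n : ℕ) (x : ℝ) : ℝ :=
  ∏ i ∈ Finset.range n, deriv F (F^[i] x)

lemma log_Dn (hpos : ∀ x : ℝ, 0 < deriv F x) (n : ℕ) (x : ℝ) :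
    Real.log (Dn F n x) = ∑ i ∈ Finset.range n, phi F (F^[i] x) :=
  Real.log_prod (fun _ _ => (hpos _).ne')

lemma dist_log_Dn (hsm : StrictMono F) (hpos : ∀ x : ℝ, 0 < deriv F x) {M : ℝ} (hM0 : 0 ≤ M)
    (hlip : ∀ x y : ℝ, |phi F x - phi F y| ≤ M * |x - y|)
    (n : ℕ) {t b x y : ℝ} (hx : x ∈ Set.Icc t b) (hy : y ∈ Set.Icc t b) :
    Real.log (Dn F n x) - Real.log (Dn F n y)
      ≤ M * ∑ i ∈ Finset.range n, (F^[i] b - F^[i] t) := by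
  rw [log_Dn hpos, log_Dn hpos, ← Finset.sum_sub_distrib, Finset.mul_sum]
  apply Finset.sum_le_sum
  intro i _
  have hmono := (hsm.iterate i).monotone
  have h1 : F^[i] x ≤ F^[i] b := hmono hx.2
  have h2 : F^[i] t ≤ F^[i] x := hmono hx.1
  have h3 : F^[i] y ≤ F^[i] b := hmono hy.2
  have h4 : F^[i] t ≤ F^[i] y := hmono hy.1
  calc phi F (F^[i] x) - phi F (F^[i] y) ≤ |phi F (F^[i] x) - phi F (F^[i] y)| := le_abs_self _
  _ ≤ M * |F^[i] x - F^[i] y| := hlip _ _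
  _ ≤ M * (F^[i] b - F^[i] t) := by
      apply mul_le_mul_of_nonneg_left _ hM0
      rw [abs_le]; constructor <;> linarith

lemma ratio_Dn (hd : ContDiff ℝ (⊤ : ℕ∞) F) (n : ℕ) {a b : ℝ} (hab : a < b) :
    ∃ c ∈ Set.Ioo a b, Dn F n c = (F^[n] b - F^[n] a) / (b - a) :=
  exists_hasDerivAt_eq_slope _ (Dn F n) hab
    (fun x _ => (hasDerivAt_iter hd n x).continuousAt.continuousWithinAt)
    (fun x _ => hasDerivAt_iter hd n x)

lemma schwartz (hd : ContDiff ℝ (⊤ : ℕ∞) F) (hpos : ∀ x : ℝ, 0 < deriv F x)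
    (hsm : StrictMono F) {M ε : ℝ} (hM0 : 0 ≤ M)
    (hlip : ∀ x y : ℝ, |phi F x - phi F y| ≤ M * |x - y|)
    {a b t : ℝ} (hta : t < a) (hab : a < b)
    (hsum : ∀ n : ℕ, ∑ i ∈ Finset.range n, (F^[i] b - F^[i] a) ≤ ε)
    (hexp : Real.exp (M * (2 * ε)) * ((b - t) / (b - a)) ≤ 2) :
    ∀ n : ℕ, F^[n] b - F^[n] t ≤ 2 * (F^[n] b - F^[n] a) := by
  intro n
  induction n using Nat.strong_induction_on with
  | _ n IH =>
  have htb : t < b := hta.trans hab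
  have hsum' : ∑ i ∈ Finset.range n, (F^[i] b - F^[i] t) ≤ 2 * ε := by
    calc ∑ i ∈ Finset.range n, (F^[i] b - F^[i] t)
        ≤ ∑ i ∈ Finset.range n, 2 * (F^[i] b - F^[i] a) :=
          Finset.sum_le_sum fun i hi => IH i (Finset.mem_range.mp hi)
      _ = 2 * ∑ i ∈ Finset.range n, (F^[i] b - F^[i] a) := by rw [Finset.mul_sum]
      _ ≤ 2 * ε := by linarith [hsum n]
  obtain ⟨ξ, hξ, hDξ⟩ := ratio_Dn hd n htb
  obtain ⟨η, hη, hDη⟩ := ratio_Dn hd n hab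
  have hξ' : ξ ∈ Set.Icc t b := ⟨hξ.1.le, hξ.2.le⟩
  have hη' : η ∈ Set.Icc t b := ⟨(hta.trans hη.1).le, hη.2.le⟩
  have hlog : Real.log (Dn F n ξ) - Real.log (Dn F n η) ≤ M * (2 * ε) := by
    calc Real.log (Dn F n ξ) - Real.log (Dn F n η)
        ≤ M * ∑ i ∈ Finset.range n, (F^[i] b - F^[i] t) :=
          dist_log_Dn hsm hpos hM0 hlip n hξ' hη'
      _ ≤ M * (2 * ε) := mul_le_mul_of_nonneg_left hsum' hM0
  have hDpos : 0 < Dn F n ξ := derivIter_pos hpos n ξ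
  have hDpos' : 0 < Dn F n η := derivIter_pos hpos n η
  have hDle : Dn F n ξ ≤ Real.exp (M * (2 * ε)) * Dn F n η := by
    have : Real.log (Dn F n ξ) ≤ M * (2 * ε) + Real.log (Dn F n η) := by linarith
    calc Dn F n ξ = Real.exp (Real.log (Dn F n ξ)) := (Real.exp_log hDpos).symm
      _ ≤ Real.exp (M * (2 * ε) + Real.log (Dn F n η)) := Real.exp_le_exp.2 this
      _ = Real.exp (M * (2 * ε)) * Dn F n η := by rw [Real.exp_add, Real.exp_log hDpos']
  have hℓpos : 0 < F^[n] b - F^[n] a := sub_pos.2 ((hsm.iterate n) hab)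
  have hL : F^[n] b - F^[n] t = Dn F n ξ * (b - t) := by
    rw [hDξ, div_mul_cancel₀ _ (sub_ne_zero.2 htb.ne')]
  have hbt : 0 < b - t := by linarith
  have hba : 0 < b - a := by linarith
  calc F^[n] b - F^[n] t = Dn F n ξ * (b - t) := hL
    _ ≤ (Real.exp (M * (2 * ε)) * Dn F n η) * (b - t) :=
        mul_le_mul_of_nonneg_right hDle hbt.le
    _ = (Real.exp (M * (2 * ε)) * ((b - t) / (b - a))) * (F^[n] b - F^[n] a) := by
        rw [hDη]; field_simp
    _ ≤ 2 * (F^[n] b - F^[n] a) := mul_le_mul_of_nonneg_right hexp hℓpos.le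

end DAux

namespace DAux
open Real MeasureTheory
variable {F Finv : ℝ → ℝ} {K : Set ℝ}

/-- `K` is a "good" set: nonempty, closed, invariant under integer translations and
under `F` and its inverse. -/
def Good (F Finv : ℝ → ℝ) (S : Set ℝ) : Prop :=
  S.Nonempty ∧ IsClosed S ∧ (∀ x ∈ S, x + 1 ∈ S) ∧ (∀ x ∈ S, x - 1 ∈ S) ∧
    (∀ x ∈ S, F x ∈ S) ∧ (∀ x ∈ S, Finv x ∈ S)

lemma Good.add_int (h : Good F Finv K) {x : ℝ} (hx : x ∈ K) (m : ℤ) : x + m ∈ K := by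
  induction m using Int.induction_on with
  | zero => simpa using hx
  | succ n ih =>
      have := h.2.2.1 _ ih
      have e : x + ((n : ℤ) + 1 : ℤ) = (x + (n : ℤ)) + 1 := by push_cast; ring
      rwa [e]
  | pred n ih =>
      have := h.2.2.2.1 _ ih
      have e : x + (-(n : ℤ) - 1 : ℤ) = (x + (-(n : ℤ) : ℤ)) - 1 := by push_cast; ring
      rwa [e]

lemma Good.iter (h : Good F Finv K) {x : ℝ} (hx : x ∈ K) (n : ℕ) : F^[n] x ∈ K := by
  induction n with
  | zero => simpa using hx
  | succ k ih => rw [Function.iterate_succ_apply']; exact h.2.2.2.2.1 _ ih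

def IsGap (K : Set ℝ) (a b : ℝ) : Prop :=
  a < b ∧ a ∈ K ∧ b ∈ K ∧ Set.Ioo a b ∩ K = ∅

lemma notmem_gap {a b x : ℝ} (h : IsGap K a b) (hx : x ∈ K) : x ∉ Set.Ioo a b := by
  intro hmem
  have : x ∈ Set.Ioo a b ∩ K := ⟨hmem, hx⟩
  rw [h.2.2.2] at this
  exact this

lemma gap_eq_of_inter {a b c d : ℝ} (h1 : IsGap K a b) (h2 : IsGap K c d)
    (h : (Set.Ioo a b ∩ Set.Ioo c d).Nonempty) : a = c ∧ b = d := by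
  obtain ⟨x, ⟨hax, hxb⟩, ⟨hcx, hxd⟩⟩ := h
  have nc := notmem_gap h1 h2.2.1
  have nd := notmem_gap h1 h2.2.2.1
  have na := notmem_gap h2 h1.2.1
  have nb := notmem_gap h2 h1.2.2.1
  simp only [Set.mem_Ioo, not_and, not_lt] at nc nd na nb
  constructor
  · rcases lt_trichotomy a c with h | h | h
    · exact absurd (nc h) (by push_neg; exact hcx.trans hxb)
    · exact h
    · exact absurd (na h) (by push_neg; exact hax.trans hxd)
  · rcases lt_trichotomy b d with h | h | h
    · have hcb : c < b := hcx.trans hxb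
      exact absurd (nb hcb) (by push_neg; exact h)
    · exact h
    · have had : a < d := hax.trans hxd
      exact absurd (nd had) (by push_neg; exact h)

lemma gap_image (hg : Good F Finv K) (hsmInv : StrictMono Finv)
    (hli : ∀ x, Finv (F x) = x) (hsm : StrictMono F)
    {a b : ℝ} (h : IsGap K a b) : IsGap K (F a) (F b) := by
  refine ⟨hsm h.1, hg.2.2.2.2.1 _ h.2.1, hg.2.2.2.2.1 _ h.2.2.1, ?_⟩
  ext x
  simp only [Set.mem_inter_iff, Set.mem_Ioo, Set.mem_empty_iff_false, iff_false, not_and]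
  rintro ⟨h1, h2⟩ hxK
  have hx1 : a < Finv x := by
    have := hsmInv h1; rwa [hli] at this
  have hx2 : Finv x < b := by
    have := hsmInv h2; rwa [hli] at this
  have : Finv x ∈ Set.Ioo a b ∩ K := ⟨⟨hx1, hx2⟩, hg.2.2.2.2.2 _ hxK⟩
  rw [h.2.2.2] at this
  exact this

lemma gap_translate (hg : Good F Finv K) {a b : ℝ} (h : IsGap K a b) (m : ℤ) :
    IsGap K (a + m) (b + m) := by
  refine ⟨by linarith [h.1], hg.add_int h.2.1 m, hg.add_int h.2.2.1 m, ?_⟩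
  ext x
  simp only [Set.mem_inter_iff, Set.mem_Ioo, Set.mem_empty_iff_false, iff_false, not_and]
  rintro ⟨h1, h2⟩ hxK
  have : x + (-m : ℤ) ∈ Set.Ioo a b ∩ K := by
    refine ⟨⟨?_, ?_⟩, hg.add_int hxK (-m)⟩ <;> push_cast <;> linarith
  rw [h.2.2.2] at this
  exact this

lemma gap_iter (hg : Good F Finv K) (hsmInv : StrictMono Finv)
    (hli : ∀ x, Finv (F x) = x) (hsm : StrictMono F)
    {a b : ℝ} (h : IsGap K a b) (n : ℕ) : IsGap K (F^[n] a) (F^[n] b) := by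
  induction n with
  | zero => simpa using h
  | succ k ih =>
      rw [Function.iterate_succ_apply', Function.iterate_succ_apply']
      exact gap_image hg hsmInv hli hsm ih

end DAux

namespace DAux
open Real MeasureTheory
variable {F Finv : ℝ → ℝ} {K : Set ℝ}

lemma gaps_disjoint (hg : Good F Finv K) (hsmInv : StrictMono Finv)
    (hli : ∀ x, Finv (F x) = x) (hsm : StrictMono F)
    (hnp : ∀ n : ℕ, 0 < n → ∀ x : ℝ, ∀ m : ℤ, F^[n] x ≠ x + m)
    {a b : ℝ} (h : IsGap K a b) {i j : ℕ} (hij : i < j) (m : ℤ) :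
    Set.Ioo (F^[i] a) (F^[i] b) ∩ Set.Ioo (F^[j] a + m) (F^[j] b + m) = ∅ := by
  by_contra hne
  rw [← Set.not_nonempty_iff_eq_empty, not_not] at hne
  have g1 := gap_iter hg hsmInv hli hsm h i
  have g2 := gap_translate hg (gap_iter hg hsmInv hli hsm h j) m
  obtain ⟨he, -⟩ := gap_eq_of_inter g1 g2 hne
  -- F^[i] a = F^[j] a + m, so F^[j-i] (F^[i] a) = F^[i] a + (-m)
  have hiter : F^[j - i] (F^[i] a) = F^[j] a := by
    rw [← Function.iterate_add_apply]
    congr 1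
    omega
  apply hnp (j - i) (by omega) (F^[i] a) (-m)
  rw [hiter, he]
  push_cast
  ring

lemma sum_gap_le_one (hg : Good F Finv K) (hsmInv : StrictMono Finv)
    (hli : ∀ x, Finv (F x) = x) (hsm : StrictMono F)
    (hper : ∀ x : ℝ, F (x + 1) = F x + 1)
    (hnp : ∀ n : ℕ, 0 < n → ∀ x : ℝ, ∀ m : ℤ, F^[n] x ≠ x + m)
    {a b : ℝ} (h : IsGap K a b) (hb1 : b ≤ a + 1) (n : ℕ) :
    ∑ i ∈ Finset.range n, (F^[i] b - F^[i] a) ≤ 1 := by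
  classical
  set av : ℕ → ℝ := fun i => F^[i] a with hav
  set bv : ℕ → ℝ := fun i => F^[i] b with hbv
  have hlt : ∀ i, av i < bv i := fun i => (hsm.iterate i) h.1
  have hlen : ∀ i, bv i ≤ av i + 1 := by
    intro i
    have := (hsm.iterate i).monotone hb1
    rw [show a + (1:ℝ) = a + ((1:ℤ):ℝ) by norm_num,
      iterate_add_int hper i a 1] at this
    simpa using this
  -- the projected sets
  set B : ℕ → Set ℝ := fun i =>
    Set.Ioo (av i - ⌊av i⌋) (min (bv i - ⌊av i⌋) 1) ∪ Set.Ioo 0 (bv i - ⌊av i⌋ - 1) with hB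
  have hBsub : ∀ i, B i ⊆ Set.Ico (0:ℝ) 1 := by
    intro i x hx
    rcases hx with hx | hx
    · exact ⟨le_trans (sub_nonneg.2 (Int.floor_le _)) hx.1.le, lt_of_lt_of_le hx.2 (min_le_right _ _)⟩
    · refine ⟨hx.1.le, lt_of_le_of_lt hx.2.le ?_⟩
      have h1 := hlen i
      have h3 := Int.lt_floor_add_one (av i)
      linarith
  have hBIoo : ∀ i, ∀ x ∈ B i, ∃ m : ℤ, x + m ∈ Set.Ioo (av i) (bv i) := by
    intro i x hx
    rcases hx with hx | hx
    · refine ⟨⌊av i⌋, ?_, ?_⟩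
      · linarith [hx.1]
      · have := lt_of_lt_of_le hx.2 (min_le_left _ _); linarith
    · refine ⟨⌊av i⌋ + 1, ?_, ?_⟩
      · push_cast
        have h0 : av i - ⌊av i⌋ < 1 := by
          have := Int.lt_floor_add_one (av i); linarith
        linarith [hx.1]
      · push_cast; linarith [hx.2]
  have hBmeas : ∀ i, MeasurableSet (B i) := fun i =>
    (measurableSet_Ioo.union measurableSet_Ioo)
  have hBdisj : ∀ i j, i < j → Disjoint (B i) (B j) := by
    intro i j hij
    rw [Set.disjoint_left]
    intro x hxi hxj
    obtain ⟨mi, hmi⟩ := hBIoo i x hxi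
    obtain ⟨mj, hmj⟩ := hBIoo j x hxj
    have : x + mi ∈ Set.Ioo (av i) (bv i) ∩ Set.Ioo (av j + (mi - mj : ℤ)) (bv j + (mi - mj : ℤ)) := by
      refine ⟨hmi, ?_, ?_⟩ <;>
      · simp only [Set.mem_Ioo] at hmj; push_cast; linarith [hmj.1, hmj.2]
    rw [gaps_disjoint hg hsmInv hli hsm hnp h hij (mi - mj)] at this
    exact this
  have hvol : ∀ i, ENNReal.ofReal (bv i - av i) ≤ volume (B i) := by
    intro i
    set a' : ℝ := av i - ⌊av i⌋ with ha'
    set b' : ℝ := bv i - ⌊av i⌋ with hb'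
    have hd : Disjoint (Set.Ioo a' (min b' 1)) (Set.Ioo (0:ℝ) (b' - 1)) := by
      rw [Set.disjoint_left]
      intro x hx1 hx2
      have hba : b' ≤ a' + 1 := by
        have := hlen i; simp only [ha', hb']; linarith
      exact absurd hx2.2 (by push_neg; linarith [hx1.1])
    rw [hB]
    rw [measure_union hd measurableSet_Ioo, Real.volume_Ioo, Real.volume_Ioo]
    rcases le_or_gt b' 1 with hcase | hcase
    · have : min b' 1 = b' := min_eq_left hcase
      rw [this]
      have e2 : b' - a' = bv i - av i := by rw [hb', ha']; ring
      rw [e2]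
      exact le_add_right le_rfl
    · have h1 : min b' 1 = 1 := min_eq_right hcase.le
      rw [h1]
      have ha0 : a' < 1 := by
        have := Int.lt_floor_add_one (av i); simp only [ha']; linarith
      rw [← ENNReal.ofReal_add (by linarith) (by linarith)]
      apply ENNReal.ofReal_le_ofReal
      simp only [ha', hb']; linarith
  have hsum : ∑ i ∈ Finset.range n, ENNReal.ofReal (bv i - av i) ≤ 1 := by
    calc ∑ i ∈ Finset.range n, ENNReal.ofReal (bv i - av i)
        ≤ ∑ i ∈ Finset.range n, volume (B i) := Finset.sum_le_sum fun i _ => hvol i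
      _ = volume (⋃ i ∈ Finset.range n, B i) := by
          rw [measure_biUnion_finset ?_ (fun i _ => hBmeas i)]
          intro i _ j _ hne
          rcases lt_or_gt_of_ne hne with hlt' | hlt'
          · exact hBdisj i j hlt'
          · exact (hBdisj j i hlt').symm
      _ ≤ volume (Set.Ico (0:ℝ) 1) := by
          apply measure_mono
          exact Set.iUnion₂_subset fun i _ => hBsub i
      _ = 1 := by rw [Real.volume_Ico]; norm_num
  have : ENNReal.ofReal (∑ i ∈ Finset.range n, (bv i - av i)) ≤ ENNReal.ofReal 1 := by
    rw [ENNReal.ofReal_sum_of_nonneg (fun i _ => by linarith [hlt i])]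
    simpa using hsum
  rwa [ENNReal.ofReal_le_ofReal_iff (by norm_num)] at this

end DAux

namespace DAux
open Real
variable {F Finv : ℝ → ℝ}

lemma exists_minimal_good {S : Set ℝ} (hS : Good F Finv S) :
    ∃ K, K ⊆ S ∧ Good F Finv K ∧ ∀ K', Good F Finv K' → K' ⊆ K → K' = K := by
  have hzorn : ∀ c ⊆ {T | Good F Finv T}, IsChain (· ⊆ ·) c → c.Nonempty →
      ∃ lb ∈ {T | Good F Finv T}, ∀ s ∈ c, lb ⊆ s := by
    intro c hc hchain hcne
    refine ⟨⋂₀ c, ?_, fun T hT => Set.sInter_subset_of_mem hT⟩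
    have hcl : IsClosed (⋂₀ c) := isClosed_sInter fun T hT => (hc hT).2.1
    refine ⟨?_, hcl, ?_, ?_, ?_, ?_⟩
    · -- nonempty via compactness
      haveI : Nonempty c := hcne.to_subtype
      have key : (⋂ T : c, ((T : Set ℝ) ∩ Set.Icc 0 1)).Nonempty := by
        apply IsCompact.nonempty_iInter_of_directed_nonempty_isCompact_isClosed
        · intro T U
          rcases hchain.total T.2 U.2 with h | h
          · exact ⟨T, le_rfl, Set.inter_subset_inter_left _ h⟩
          · exact ⟨U, Set.inter_subset_inter_left _ h, le_rfl⟩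
        · rintro ⟨T, hT⟩
          obtain ⟨x, hx⟩ := (hc hT).1
          refine ⟨x + (-⌊x⌋ : ℤ), (hc hT).add_int hx _, ?_⟩
          push_cast
          constructor
          · linarith [Int.floor_le x]
          · linarith [Int.lt_floor_add_one x]
        · exact fun T => isCompact_Icc.inter_left (hc T.2).2.1
        · exact fun T => ((hc T.2).2.1.inter isClosed_Icc)
      obtain ⟨x, hx⟩ := key
      refine ⟨x, fun T hT => ?_⟩
      have := Set.mem_iInter.mp hx ⟨T, hT⟩
      exact this.1
    · exact fun x hx T hT => (hc hT).2.2.1 x (hx T hT)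
    · exact fun x hx T hT => (hc hT).2.2.2.1 x (hx T hT)
    · exact fun x hx T hT => (hc hT).2.2.2.2.1 x (hx T hT)
    · exact fun x hx T hT => (hc hT).2.2.2.2.2 x (hx T hT)
  obtain ⟨K, hKS, hKmem, hKmin⟩ := zorn_superset_nonempty {T | Good F Finv T} hzorn S hS
  exact ⟨K, hKS, hKmem, fun K' hK' hsub => subset_antisymm hsub (hKmin hK' hsub)⟩

lemma mem_closure_shift {s s' : Set ℝ} {g : ℝ → ℝ} (hg : Continuous g)
    (hmap : g '' s ⊆ s') {y : ℝ} (hy : y ∈ closure s) : g y ∈ closure s' :=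
  closure_mono hmap (image_closure_subset_closure_image hg ⟨y, hy, rfl⟩)

lemma recurrent (hFc : Continuous F) (hFinvc : Continuous Finv)
    (hper : ∀ x : ℝ, F (x + 1) = F x + 1)
    (hli : ∀ x, Finv (F x) = x) (hri : ∀ x, F (Finv x) = x)
    {K : Set ℝ} (hK : Good F Finv K)
    (hmin : ∀ K', Good F Finv K' → K' ⊆ K → K' = K)
    {a : ℝ} (ha : a ∈ K) :
    ∀ ε > 0, ∀ N : ℕ, ∃ n, N ≤ n ∧ ∃ m : ℤ, |F^[n] a - m - a| < ε := by
  have hinv_add : ∀ (x : ℝ) (m : ℤ), Finv (x + m) = Finv x + m := by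
    intro x m
    have : F (Finv x + m) = x + m := by rw [map_add_int hper, hri]
    rw [← this, hli]
  set T : ℕ → Set ℝ := fun N => {z | ∃ n, N ≤ n ∧ ∃ m : ℤ, z = F^[n] a - m} with hT
  set Ω : Set ℝ := ⋂ N, closure (T N) with hΩ
  have hTsub : ∀ N, T N ⊆ K := by
    rintro N z ⟨n, hn, m, rfl⟩
    have : F^[n] a + (-m : ℤ) ∈ K := hK.add_int (hK.iter ha n) (-m)
    push_cast at this
    simpa [sub_eq_add_neg] using this
  have hgood : Good F Finv Ω := by
    refine ⟨?_, isClosed_iInter fun N => isClosed_closure, ?_, ?_, ?_, ?_⟩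
    · -- nonempty
      set u : ℕ → ℝ := fun n => Int.fract (F^[n] a) with hu
      have humem : ∀ n, u n ∈ Set.Icc (0:ℝ) 1 :=
        fun n => ⟨Int.fract_nonneg _, (Int.fract_lt_one _).le⟩
      obtain ⟨y, -, φ, hφ, hlim⟩ := isCompact_Icc.tendsto_subseq humem
      refine ⟨y, Set.mem_iInter.2 fun N => ?_⟩
      rw [Metric.mem_closure_iff]
      intro ε hε
      obtain ⟨k₀, hk₀⟩ := Metric.tendsto_atTop.mp hlim ε hε
      refine ⟨u (φ (max N k₀)), ⟨φ (max N k₀), le_trans (le_max_left _ _)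
        (hφ.le_apply), ⌊F^[φ (max N k₀)] a⌋, rfl⟩, ?_⟩
      rw [dist_comm]
      exact hk₀ _ (le_max_right _ _)
    · intro y hy
      refine Set.mem_iInter.2 fun N => ?_
      refine mem_closure_shift (continuous_id.add continuous_const) ?_
        (Set.mem_iInter.mp hy N)
      rintro z ⟨w, ⟨n, hn, m, rfl⟩, rfl⟩
      exact ⟨n, hn, m - 1, by simp only [Pi.add_apply, id_eq]; push_cast; ring⟩
    · intro y hy
      refine Set.mem_iInter.2 fun N => ?_
      refine mem_closure_shift (continuous_id.sub continuous_const) ?_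
        (Set.mem_iInter.mp hy N)
      rintro z ⟨w, ⟨n, hn, m, rfl⟩, rfl⟩
      exact ⟨n, hn, m + 1, by simp only [Pi.sub_apply, id_eq]; push_cast; ring⟩
    · intro y hy
      refine Set.mem_iInter.2 fun N => ?_
      refine mem_closure_shift hFc ?_ (Set.mem_iInter.mp hy N)
      rintro z ⟨w, ⟨n, hn, m, rfl⟩, rfl⟩
      refine ⟨n + 1, le_trans hn (Nat.le_succ n), m, ?_⟩
      have : F^[n] a - (m:ℝ) = F^[n] a + ((-m : ℤ) : ℝ) := by push_cast; ring
      rw [this, map_add_int hper, Function.iterate_succ_apply']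
      push_cast; ring
    · intro y hy
      refine Set.mem_iInter.2 fun N => ?_
      refine mem_closure_shift hFinvc ?_ (Set.mem_iInter.mp hy (N + 1))
      rintro z ⟨w, ⟨n, hn, m, rfl⟩, rfl⟩
      refine ⟨n - 1, by omega, m, ?_⟩
      have h1 : F^[n] a - (m:ℝ) = F^[n] a + ((-m : ℤ) : ℝ) := by push_cast; ring
      rw [h1, hinv_add]
      have h2 : F (F^[n-1] a) = F^[n] a := by
        have h3 := (Function.iterate_succ_apply' F (n-1) a).symm
        rwa [show (n-1).succ = n by omega] at h3
      rw [← h2, hli]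
      push_cast; ring
  have hΩK : Ω ⊆ K := by
    refine le_trans (Set.iInter_subset _ 0) (closure_minimal (hTsub 0) hK.2.1)
  have haΩ : a ∈ Ω := (hmin Ω hgood hΩK) ▸ ha
  intro ε hε N
  have := Set.mem_iInter.mp haΩ N
  rw [Metric.mem_closure_iff] at this
  obtain ⟨z, ⟨n, hn, m, rfl⟩, hdist⟩ := this ε hε
  refine ⟨n, hn, m, ?_⟩
  rw [Real.dist_eq, abs_sub_comm] at hdist
  exact hdist

end DAux

namespace DAux
open Real Filter
variable {F Finv : ℝ → ℝ} {K : Set ℝ}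

lemma exists_gap (hK : Good F Finv K) (hne : K ≠ Set.univ) :
    ∃ a b : ℝ, IsGap K a b ∧ b ≤ a + 1 := by
  obtain ⟨z, hz⟩ : ∃ z : ℝ, z ∉ K := by
    by_contra h
    push_neg at h
    exact hne (Set.eq_univ_of_forall h)
  obtain ⟨x₀, hx₀⟩ := hK.1
  have hA : (K ∩ Set.Iic z).Nonempty := by
    refine ⟨x₀ + (-⌈x₀ - z⌉ : ℤ), hK.add_int hx₀ _, ?_⟩
    have := Int.le_ceil (x₀ - z)
    simp only [Set.mem_Iic]
    push_cast
    linarith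
  have hB : (K ∩ Set.Ici z).Nonempty := by
    refine ⟨x₀ + (⌈z - x₀⌉ : ℤ), hK.add_int hx₀ _, ?_⟩
    have := Int.le_ceil (z - x₀)
    simp only [Set.mem_Ici]
    linarith
  have hAb : BddAbove (K ∩ Set.Iic z) := ⟨z, fun x hx => hx.2⟩
  have hBb : BddBelow (K ∩ Set.Ici z) := ⟨z, fun x hx => hx.2⟩
  set a := sSup (K ∩ Set.Iic z) with ha
  set b := sInf (K ∩ Set.Ici z) with hb
  have haK : a ∈ K ∩ Set.Iic z := (hK.2.1.inter isClosed_Iic).csSup_mem hA hAb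
  have hbK : b ∈ K ∩ Set.Ici z := (hK.2.1.inter isClosed_Ici).csInf_mem hB hBb
  have haz : a < z := lt_of_le_of_ne haK.2 (fun h => hz (h ▸ haK.1))
  have hzb : z < b := lt_of_le_of_ne hbK.2 (fun h => hz (h ▸ hbK.1))
  have hgapset : Set.Ioo a b ∩ K = ∅ := by
    ext x
    simp only [Set.mem_inter_iff, Set.mem_Ioo, Set.mem_empty_iff_false, iff_false, not_and]
    rintro ⟨hax, hxb⟩ hxK
    rcases le_total x z with h | h
    · exact absurd (le_csSup hAb ⟨hxK, h⟩) (by push_neg; exact hax)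
    · exact absurd (csInf_le hBb ⟨hxK, h⟩) (by push_neg; exact hxb)
  have hgap : IsGap K a b := ⟨haz.trans hzb, haK.1, hbK.1, hgapset⟩
  refine ⟨a, b, hgap, ?_⟩
  by_contra hlt
  push_neg at hlt
  have ha1 : a + 1 ∈ K := by
    have := hK.add_int haK.1 1
    push_cast at this
    exact this
  have : a + 1 ∈ Set.Ioo a b ∩ K := ⟨⟨by linarith, hlt⟩, ha1⟩
  rw [hgapset] at this
  exact this

theorem denjoy_main (hd : ContDiff ℝ (⊤ : ℕ∞) F)
    (hper : ∀ x : ℝ, F (x + 1) = F x + 1) (hpos : ∀ x : ℝ, 0 < deriv F x)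
    (hli : ∀ x, Finv (F x) = x) (hri : ∀ x, F (Finv x) = x)
    (hsmInv : StrictMono Finv) (hFinvc : Continuous Finv)
    (hnp : ∀ n : ℕ, 0 < n → ∀ x : ℝ, ∀ m : ℤ, F^[n] x ≠ x + m)
    {S : Set ℝ} (hS : Good F Finv S) : S = Set.univ := by
  by_contra hne
  have hsm : StrictMono F := strictMono_of_deriv_pos hpos
  have hFc : Continuous F := (diffF hd).continuous
  obtain ⟨K, hKS, hK, hmin⟩ := exists_minimal_good hS
  have hKne : K ≠ Set.univ := fun h => hne (Set.univ_subset_iff.1 (h ▸ hKS) ▸ rfl)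
  obtain ⟨a, b, hgap, hb1⟩ := exists_gap hK hKne
  obtain ⟨M, hM0, hlip⟩ := exists_lip hd hper hpos
  set ε : ℝ := Real.log (4/3) / (2*M+1) with hεdef
  have hε : 0 < ε := div_pos (Real.log_pos (by norm_num)) (by linarith)
  have hexpε : Real.exp (M * (2*ε)) ≤ 4/3 := by
    have h1 : M * (2*ε) ≤ Real.log (4/3) := by
      rw [hεdef]
      rw [div_eq_inv_mul, ← mul_assoc, ← mul_assoc]
      have hlog : 0 < Real.log (4/3) := Real.log_pos (by norm_num)
      have : M * 2 * (2*M+1)⁻¹ ≤ 1 := by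
        rw [mul_inv_le_iff₀ (by linarith)]
        linarith
      nlinarith
    calc Real.exp (M * (2*ε)) ≤ Real.exp (Real.log (4/3)) := Real.exp_le_exp.2 h1
      _ = 4/3 := Real.exp_log (by norm_num)
  set ℓ : ℕ → ℝ := fun i => F^[i] b - F^[i] a with hℓ
  have hℓpos : ∀ i, 0 < ℓ i := fun i => sub_pos.2 ((hsm.iterate i) hgap.1)
  have hsum1 : ∀ n, ∑ i ∈ Finset.range n, ℓ i ≤ 1 :=
    sum_gap_le_one hK hsmInv hli hsm hper hnp hgap hb1
  have hsummable : Summable ℓ :=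
    summable_of_sum_range_le (fun n => (hℓpos n).le) hsum1
  -- choose a tail with small sum
  obtain ⟨N, hN⟩ : ∃ N : ℕ, ∑' i : ℕ, ℓ (i + N) < ε := by
    have := tendsto_sum_nat_add ℓ
    rw [Metric.tendsto_atTop] at this
    obtain ⟨N, hN⟩ := this ε hε
    refine ⟨N, ?_⟩
    have := hN N le_rfl
    rw [Real.dist_eq, sub_zero] at this
    exact lt_of_abs_lt this
  set a' : ℝ := F^[N] a with ha'
  set b' : ℝ := F^[N] b with hb'
  have hgap' : IsGap K a' b' := gap_iter hK hsmInv hli hsm hgap N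
  have hℓ' : ∀ i, F^[i] b' - F^[i] a' = ℓ (i + N) := by
    intro i
    rw [ha', hb', hℓ, ← Function.iterate_add_apply, ← Function.iterate_add_apply]
  have hsum' : ∀ n, ∑ i ∈ Finset.range n, (F^[i] b' - F^[i] a') ≤ ε := by
    intro n
    calc ∑ i ∈ Finset.range n, (F^[i] b' - F^[i] a')
        = ∑ i ∈ Finset.range n, ℓ (i + N) := Finset.sum_congr rfl fun i _ => hℓ' i
      _ ≤ ∑' i : ℕ, ℓ (i + N) := Summable.sum_le_tsum _ (fun i _ => (hℓpos _).le)
          ((summable_nat_add_iff N).2 hsummable)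
      _ ≤ ε := hN.le
  set t : ℝ := a' - (b' - a')/2 with ht
  have hab' : a' < b' := hgap'.1
  have hta : t < a' := by rw [ht]; linarith
  have hexp2 : Real.exp (M * (2*ε)) * ((b' - t)/(b' - a')) ≤ 2 := by
    have he3 : b' - t = (3/2) * (b' - a') := by rw [ht]; ring
    have hr : (b' - t)/(b' - a') = 3/2 := by
      rw [he3, mul_div_assoc, div_self (by linarith : b' - a' ≠ 0), mul_one]
    rw [hr]
    linarith
  have hschw := schwartz hd hpos hsm hM0 hlip hta hab' hsum' hexp2
  -- recurrence at a'
  have ha'K : a' ∈ K := hK.iter hgap.2.1 N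
  have hrec := recurrent hFc hFinvc hper hli hri hK hmin ha'K
  set ε' : ℝ := (b' - a')/4 with hε'
  have hε'pos : 0 < ε' := by rw [hε']; linarith
  -- lengths tend to zero
  have hℓ0 : Tendsto (fun n => F^[n] b' - F^[n] a') atTop (nhds 0) := by
    have h1 : Tendsto ℓ atTop (nhds 0) := hsummable.tendsto_atTop_zero
    have h2 : Tendsto (fun n : ℕ => n + N) atTop atTop := tendsto_add_atTop_nat N
    have := h1.comp h2
    refine this.congr fun n => ?_
    simp only [Function.comp_apply]
    exact (hℓ' n).symm
  obtain ⟨n₀, hn₀⟩ : ∃ n₀, ∀ n ≥ n₀, 2 * (F^[n] b' - F^[n] a') < ε'/2 := by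
    rw [Metric.tendsto_atTop] at hℓ0
    obtain ⟨n₀, h⟩ := hℓ0 (ε'/4) (by linarith)
    refine ⟨n₀, fun n hn => ?_⟩
    have := h n hn
    rw [Real.dist_eq, sub_zero] at this
    have := lt_of_abs_lt this
    linarith
  obtain ⟨n, hn, m, hm⟩ := hrec (ε'/2) (by linarith) (max n₀ 1)
  have hn1 : 1 ≤ n := le_trans (le_max_right _ _) hn
  have hnn₀ : n₀ ≤ n := le_trans (le_max_left _ _) hn
  -- the map H x = F^[n] x - m maps Icc t b' into itself
  have hmap : ∀ x ∈ Set.Icc t b', F^[n] x - m ∈ Set.Icc t b' := by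
    intro x hx
    have h1 : |F^[n] x - F^[n] a'| ≤ F^[n] b' - F^[n] t := by
      have hmono := (hsm.iterate n).monotone
      have i1 : F^[n] x ≤ F^[n] b' := hmono hx.2
      have i2 : F^[n] t ≤ F^[n] x := hmono hx.1
      have i3 : F^[n] a' ≤ F^[n] b' := hmono hab'.le
      have i4 : F^[n] t ≤ F^[n] a' := hmono hta.le
      rw [abs_le]
      constructor <;> linarith
    have h2 : F^[n] b' - F^[n] t ≤ 2 * (F^[n] b' - F^[n] a') := hschw n
    have h3 : 2 * (F^[n] b' - F^[n] a') < ε'/2 := hn₀ n hnn₀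
    have h4 : |F^[n] a' - m - a'| < ε'/2 := hm
    have : |F^[n] x - m - a'| < ε' := by
      have := abs_sub_abs_le_abs_sub (F^[n] x - m - a') (F^[n] a' - m - a')
      have habs : |F^[n] x - m - a'| ≤ |F^[n] x - F^[n] a'| + |F^[n] a' - m - a'| := by
        have : F^[n] x - m - a' = (F^[n] x - F^[n] a') + (F^[n] a' - m - a') := by ring
        rw [this]
        exact abs_add_le _ _
      linarith
    have h5 := abs_lt.mp this
    constructor
    · rw [ht]; rw [hε'] at h5; linarith [h5.1]
    · rw [hε'] at h5; linarith [h5.2]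
  -- fixed point via IVT
  have hcont : ContinuousOn (fun x => F^[n] x - m - x) (Set.Icc t b') :=
    ((hFc.iterate n).sub continuous_const).sub continuous_id |>.continuousOn
  have hgt : 0 ≤ F^[n] t - m - t := by
    have := (hmap t ⟨le_rfl, (hta.trans hab').le⟩).1
    linarith
  have hlb : F^[n] b' - m - b' ≤ 0 := by
    have := (hmap b' ⟨(hta.trans hab').le, le_rfl⟩).2
    linarith
  have hivt := intermediate_value_Icc' (hta.trans hab').le hcont
  have h0mem : (0:ℝ) ∈ Set.Icc (F^[n] b' - m - b') (F^[n] t - m - t) := ⟨hlb, hgt⟩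
  obtain ⟨c, -, hc⟩ := hivt h0mem
  have hc' : F^[n] c - (m:ℝ) - c = 0 := hc
  exact hnp n hn1 c m (by linarith)

end DAux


open DAux

/-- Let `f` be an orientation-preserving `C^∞` circle diffeomorphism with irrational
rotation number and let `g` be an orientation-preserving circle homeomorphism commuting
with `f`. If `g` has a fixed point, then `g = id`. (All circle maps are given by lifts:
commutation, fixed points and equality with the identity hold up to integer translations.) -/
theorem commuting_with_irrational_fixed_point_eq_id (F G : ℝ → ℝ)
    (hF : SmoothCircleLift F) (hG : CircleHomeoLift G)
    (ρ : ℝ) (hρ : HasRotationNumber F ρ) (hirr : Irrational ρ)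
    (hcomm : ∃ m : ℤ, ∀ x : ℝ, F (G x) = G (F x) + m)
    (hfix : ∃ x : ℝ, ∃ m : ℤ, G x = x + m) :
    ∃ m : ℤ, ∀ x : ℝ, G x = x + m := by
  obtain ⟨hd, hper, hpos⟩ := hF
  obtain ⟨hGc, hGsm, hGsurj, hGper⟩ := hG
  obtain ⟨m₀, hcm⟩ := hcomm
  have hsm : StrictMono F := strictMono_of_deriv_pos hpos
  have hFc : Continuous F := (diffF hd).continuous
  -- surjectivity of F
  have hFsurj : Function.Surjective F := by
    intro y
    set n : ℤ := ⌊y - F 0⌋ with hn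
    have h1 : F (n : ℝ) ≤ y := by
      have : F ((0:ℝ) + n) = F 0 + n := map_add_int hper 0 n
      simp only [zero_add] at this
      rw [this]
      have := Int.floor_le (y - F 0)
      rw [← hn] at this
      linarith
    have h2 : y ≤ F ((n : ℝ) + 1) := by
      have e : ((n:ℝ) + 1) = (0:ℝ) + ((n + 1 : ℤ) : ℝ) := by push_cast; ring
      rw [e, map_add_int hper 0 (n+1)]
      have := Int.lt_floor_add_one (y - F 0)
      rw [← hn] at this
      push_cast
      linarith
    have := intermediate_value_Icc (by linarith : (n:ℝ) ≤ (n:ℝ) + 1) hFc.continuousOn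
    obtain ⟨x, -, hx⟩ := this ⟨h1, h2⟩
    exact ⟨x, hx⟩
  -- the inverse homeomorphism
  set e : ℝ ≃o ℝ := StrictMono.orderIsoOfSurjective F hsm hFsurj with he
  set Finv : ℝ → ℝ := fun x => e.symm x with hFinvdef
  have hri : ∀ x, F (Finv x) = x := fun x => by
    have : e (e.symm x) = x := e.apply_symm_apply x
    exact this
  have hli : ∀ x, Finv (F x) = x := fun x => by
    have : e.symm (e x) = x := e.symm_apply_apply x
    exact this
  have hsmInv : StrictMono Finv := fun x y hxy => e.symm.strictMono hxy
  have hFinvc : Continuous Finv := e.symm.continuous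
  -- no periodic points
  have hnp : ∀ n : ℕ, 0 < n → ∀ x : ℝ, ∀ m : ℤ, F^[n] x ≠ x + m := by
    set f : CircleDeg1Lift := ⟨⟨F, hsm.monotone⟩, hper⟩ with hf
    have hcoe : ⇑f = F := rfl
    have htau : f.translationNumber = ρ := by
      have h1 := f.tendsto_translation_number₀
      have h2 : (fun n : ℕ => (f ^ n) 0 / n) = fun n : ℕ => F^[n] 0 / n := by
        funext n
        rw [CircleDeg1Lift.coe_pow, hcoe]
      rw [h2] at h1
      exact tendsto_nhds_unique h1 hρ
    intro n hn x m hiter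
    have hpow : (f ^ n) x = x + m := by
      rw [CircleDeg1Lift.coe_pow, hcoe]
      exact hiter
    have := f.translationNumber_of_map_pow_eq_add_int hpow hn
    rw [htau] at this
    exact hirr ⟨(m : ℚ) / (n : ℚ), by push_cast; exact this.symm⟩
  -- the fixed point set
  set Fix : Set ℝ := {x | ∃ m : ℤ, G x = x + m} with hFixdef
  have hGood : Good F Finv Fix := by
    refine ⟨?_, ?_, ?_, ?_, ?_, ?_⟩
    · obtain ⟨x, m, hx⟩ := hfix
      exact ⟨x, m, hx⟩
    · have : Fix = (fun x => G x - x) ⁻¹' (Set.range ((↑) : ℤ → ℝ)) := by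
        ext x
        simp only [hFixdef, Set.mem_setOf_eq, Set.mem_preimage, Set.mem_range]
        constructor
        · rintro ⟨m, hm⟩; exact ⟨m, by rw [hm]; ring⟩
        · rintro ⟨m, hm⟩; exact ⟨m, by linarith⟩
      rw [this]
      exact (Int.isClosedEmbedding_coe_real.isClosed_range).preimage
        (hGc.sub continuous_id)
    · rintro x ⟨m, hm⟩
      exact ⟨m, by rw [hGper, hm]; ring⟩
    · rintro x ⟨m, hm⟩
      refine ⟨m, ?_⟩
      have := hGper (x - 1)
      rw [sub_add_cancel] at this
      have h2 : G (x - 1) = G x - 1 := by linarith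
      rw [h2, hm]; ring
    · rintro x ⟨k, hk⟩
      refine ⟨k - m₀, ?_⟩
      have h1 : G (F x) = F (G x) - m₀ := by
        have := hcm x; linarith
      rw [h1, hk]
      have : F (x + k) = F x + k := map_add_int hper x k
      rw [this]
      push_cast
      ring
    · rintro x ⟨k, hk⟩
      refine ⟨k + m₀, ?_⟩
      have h1 : F (G (Finv x)) = G (F (Finv x)) + m₀ := hcm (Finv x)
      rw [hri] at h1
      rw [hk] at h1
      have h2 : F (Finv x + ((k + m₀ : ℤ) : ℝ)) = x + ((k + m₀ : ℤ) : ℝ) := by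
        rw [map_add_int hper, hri]
      have h3 : F (G (Finv x)) = F (Finv x + ((k + m₀ : ℤ) : ℝ)) := by
        rw [h1, h2]
        push_cast
        ring
      exact hsm.injective h3
  have hFixuniv : Fix = Set.univ :=
    denjoy_main hd hper hpos hli hri hsmInv hFinvc hnp hGood
  -- conclude: G x - x is a constant integer
  obtain ⟨x₀, m₀', hx₀⟩ := hfix
  refine ⟨m₀', fun x => ?_⟩
  have hx : x ∈ Fix := hFixuniv ▸ Set.mem_univ x
  obtain ⟨m, hm⟩ := hx
  rcases lt_trichotomy m m₀' with hlt | heq | hlt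
  · exfalso
    set v : ℝ := (m₀' : ℝ) - 1/2 with hv
    have hcont : ContinuousOn (fun y => G y - y) (Set.uIcc x x₀) :=
      (hGc.sub continuous_id).continuousOn
    have hmem : v ∈ Set.uIcc (G x - x) (G x₀ - x₀) := by
      rw [hm, hx₀]
      have e1 : x + (m:ℝ) - x = (m:ℝ) := by ring
      have e2 : x₀ + (m₀':ℝ) - x₀ = (m₀':ℝ) := by ring
      rw [e1, e2, Set.mem_uIcc]
      left
      constructor
      · have : (m:ℝ) + 1 ≤ (m₀':ℝ) := by exact_mod_cast Int.add_one_le_iff.mpr hlt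
        rw [hv]; linarith
      · rw [hv]; linarith
    obtain ⟨c, -, hc⟩ := intermediate_value_uIcc hcont hmem
    have hcFix : c ∈ Fix := hFixuniv ▸ Set.mem_univ c
    obtain ⟨mc, hmc⟩ := hcFix
    have : (mc : ℝ) = v := by
      have h2 : G c - c = (mc:ℝ) := by rw [hmc]; ring
      rw [← h2]; exact hc
    rw [hv] at this
    have h3 : ((2*mc : ℤ) : ℝ) = ((2*m₀' - 1 : ℤ) : ℝ) := by push_cast; linarith
    have h4 : (2*mc : ℤ) = 2*m₀' - 1 := by exact_mod_cast h3
    omega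
  · rw [hm, heq]
  · exfalso
    set v : ℝ := (m₀' : ℝ) + 1/2 with hv
    have hcont : ContinuousOn (fun y => G y - y) (Set.uIcc x₀ x) :=
      (hGc.sub continuous_id).continuousOn
    have hmem : v ∈ Set.uIcc (G x₀ - x₀) (G x - x) := by
      rw [hm, hx₀]
      have e1 : x + (m:ℝ) - x = (m:ℝ) := by ring
      have e2 : x₀ + (m₀':ℝ) - x₀ = (m₀':ℝ) := by ring
      rw [e1, e2, Set.mem_uIcc]
      left
      constructor
      · rw [hv]; linarith
      · have : (m₀':ℝ) + 1 ≤ (m:ℝ) := by exact_mod_cast Int.add_one_le_iff.mpr hlt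
        rw [hv]; linarith
    obtain ⟨c, -, hc⟩ := intermediate_value_uIcc hcont hmem
    have hcFix : c ∈ Fix := hFixuniv ▸ Set.mem_univ c
    obtain ⟨mc, hmc⟩ := hcFix
    have : (mc : ℝ) = v := by
      have h2 : G c - c = (mc:ℝ) := by rw [hmc]; ring
      rw [← h2]; exact hc
    rw [hv] at this
    have h3 : ((2*mc : ℤ) : ℝ) = ((2*m₀' + 1 : ℤ) : ℝ) := by push_cast; linarith
    have h4 : (2*mc : ℤ) = 2*m₀' + 1 := by exact_mod_cast h3
    omega
end
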